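/- arXiv:1406.4753 — 7 statements merged into one kernel-verified Lean document; each statement's English description precedes it below -/
import Mathlib

section
/- Let (U, W, B) be a linear system over ℂ. For any finite-dimensional subspaces U_0 ⊆ U and W_0 ⊆ W there exist finite-dimensional subspaces U_f ⊆ U and W_f ⊆ W with U_0 ⊆ U_f, W_0 ⊆ W_f, such that the restriction of B to U_f × W_f is nondegenerate (i.e. (U_f, W_f) is a finite-dimensional subsystem of (U, W)). -/
open Submodule Module

lemma memK_iff {U W : Type*} [AddCommGroup U] [Module ℂ U] [AddCommGroup W] [Module ℂ W]
    (B : U →ₗ[ℂ] W →ₗ[ℂ] ℂ) (W1 : Submodule ℂ W) (u : U) :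
    u ∈ (⨅ w ∈ W1, LinearMap.ker (B.flip w)) ↔ ∀ w ∈ W1, B u w = 0 := by
  simp [Submodule.mem_iInf]

lemma auxA {U W : Type*} [AddCommGroup U] [Module ℂ U] [AddCommGroup W] [Module ℂ W]
    (B : U →ₗ[ℂ] W →ₗ[ℂ] ℂ)
    (hB1 : ∀ u : U, (∀ w : W, B u w = 0) → u = 0)
    (U0 : Submodule ℂ U) (hU0 : FiniteDimensional ℂ U0) :
    ∀ (n : ℕ) (W1 : Submodule ℂ W), FiniteDimensional ℂ W1 →
      finrank ℂ ↥(U0 ⊓ ⨅ w ∈ W1, LinearMap.ker (B.flip w)) ≤ n →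
      ∃ W2 : Submodule ℂ W, W1 ≤ W2 ∧ FiniteDimensional ℂ W2 ∧
        ∀ u ∈ U0, (∀ w ∈ W2, B u w = 0) → u = 0 := by
  intro n
  induction n with
  | zero =>
    intro W1 hW1 hrank
    set K := U0 ⊓ ⨅ w ∈ W1, LinearMap.ker (B.flip w) with hK
    haveI : FiniteDimensional ℂ K := Submodule.finiteDimensional_of_le inf_le_left
    have hKbot : K = ⊥ :=
      (Submodule.finrank_eq_zero (R := ℂ) (M := U) (S := K)).mp (Nat.le_zero.mp hrank)
    refine ⟨W1, le_refl _, hW1, ?_⟩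
    intro u hu h0
    have huK : u ∈ K := ⟨hu, (memK_iff B W1 u).mpr h0⟩
    rw [hKbot] at huK
    exact (Submodule.mem_bot ℂ).mp huK
  | succ n ih =>
    intro W1 hW1 hrank
    set K := U0 ⊓ ⨅ w ∈ W1, LinearMap.ker (B.flip w) with hK
    haveI : FiniteDimensional ℂ K := Submodule.finiteDimensional_of_le inf_le_left
    by_cases hKbot : K = ⊥
    · refine ⟨W1, le_refl _, hW1, ?_⟩
      intro u hu h0
      have huK : u ∈ K := ⟨hu, (memK_iff B W1 u).mpr h0⟩
      rw [hKbot] at huK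
      exact (Submodule.mem_bot ℂ).mp huK
    · obtain ⟨u, huK, hu0⟩ := Submodule.exists_mem_ne_zero_of_ne_bot hKbot
      obtain ⟨w, hw⟩ : ∃ w, B u w ≠ 0 := by
        by_contra h
        push_neg at h
        exact hu0 (hB1 u h)
      set W2 := W1 ⊔ Submodule.span ℂ {w} with hW2
      haveI : FiniteDimensional ℂ W2 := Submodule.finiteDimensional_sup _ _
      set K2 := U0 ⊓ ⨅ w ∈ W2, LinearMap.ker (B.flip w) with hK2
      have hle : K2 < K := by
        constructor
        · intro x hx
          simp only [hK2, hK, SetLike.mem_coe, Submodule.mem_inf] at hx ⊢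
          refine ⟨hx.1, ?_⟩
          rw [memK_iff]
          exact fun y hy => (memK_iff B W2 x).mp hx.2 y (Submodule.mem_sup_left hy)
        · intro hcon
          have huK2 : u ∈ K2 := hcon huK
          have : B u w = 0 :=
            (memK_iff B W2 u).mp huK2.2 w
              (Submodule.mem_sup_right (Submodule.mem_span_singleton_self w))
          exact hw this
      have hr2 : finrank ℂ K2 ≤ n := by
        have := Submodule.finrank_lt_finrank_of_lt (s := K2) (t := K) hle
        omega
      obtain ⟨W3, hle3, hfd3, hnd3⟩ := ih W2 inferInstance hr2
      exact ⟨W3, le_trans le_sup_left hle3, hfd3, hnd3⟩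



/-- Let `(U, W, B)` be a linear system over `ℂ`.  Any pair of finite-dimensional subspaces
`U₀ ⊆ U`, `W₀ ⊆ W` is contained in a finite-dimensional subsystem `(U_f, W_f)`, i.e. in
finite-dimensional subspaces on which the restriction of `B` is nondegenerate. -/
theorem stmt_1 {U W : Type*} [AddCommGroup U] [Module ℂ U] [AddCommGroup W] [Module ℂ W]
    (B : U →ₗ[ℂ] W →ₗ[ℂ] ℂ)
    (hB1 : ∀ u : U, (∀ w : W, B u w = 0) → u = 0)
    (hB2 : ∀ w : W, (∀ u : U, B u w = 0) → w = 0)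
    (U0 : Submodule ℂ U) (W0 : Submodule ℂ W)
    (hU0 : FiniteDimensional ℂ U0) (hW0 : FiniteDimensional ℂ W0) :
    ∃ (Uf : Submodule ℂ U) (Wf : Submodule ℂ W),
      U0 ≤ Uf ∧ W0 ≤ Wf ∧ FiniteDimensional ℂ Uf ∧ FiniteDimensional ℂ Wf ∧
      (∀ u ∈ Uf, (∀ w ∈ Wf, B u w = 0) → u = 0) ∧
      (∀ w ∈ Wf, (∀ u ∈ Uf, B u w = 0) → w = 0) := by
  -- Step 1: enlarge W0 to Wf so that B is left-nondegenerate on U0 × Wf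
  haveI : FiniteDimensional ℂ ↥(U0 ⊓ ⨅ w ∈ W0, LinearMap.ker (B.flip w)) :=
    Submodule.finiteDimensional_of_le inf_le_left
  obtain ⟨Wf, hW0Wf, hWfFD, hleft0⟩ :=
    auxA B hB1 U0 hU0 (Module.finrank ℂ ↥(U0 ⊓ ⨅ w ∈ W0, LinearMap.ker (B.flip w)))
      W0 hW0 le_rfl
  -- Step 2: enlarge U0 to U1 so that B is right-nondegenerate on U1 × Wf
  haveI : FiniteDimensional ℂ ↥(Wf ⊓ ⨅ u ∈ U0, LinearMap.ker (B.flip.flip u)) :=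
    Submodule.finiteDimensional_of_le inf_le_left
  obtain ⟨U1, hU0U1, hU1FD, hright1⟩ :=
    auxA B.flip hB2 Wf hWfFD
      (Module.finrank ℂ ↥(Wf ⊓ ⨅ u ∈ U0, LinearMap.ker (B.flip.flip u)))
      U0 hU0 le_rfl
  -- the residual left kernel inside U1
  set K : Submodule ℂ U := U1 ⊓ ⨅ w ∈ Wf, LinearMap.ker (B.flip w) with hKdef
  have hKkills : ∀ u ∈ K, ∀ w ∈ Wf, B u w = 0 := by
    intro u hu w hw
    exact (memK_iff B Wf u).mp hu.2 w hw
  have hU0K : ∀ u ∈ U0, u ∈ K → u = 0 := by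
    intro u hu huK
    exact hleft0 u hu (fun w hw => hKkills u huK w hw)
  -- work inside U1
  set U0' : Submodule ℂ ↥U1 := U0.comap U1.subtype with hU0'def
  set K' : Submodule ℂ ↥U1 := K.comap U1.subtype with hK'def
  obtain ⟨D, hD⟩ := Submodule.exists_isCompl (U0' ⊔ K')
  set C : Submodule ℂ ↥U1 := U0' ⊔ D with hCdef
  set Uf : Submodule ℂ U := C.map U1.subtype with hUfdef
  have hUfle : Uf ≤ U1 := Submodule.map_subtype_le U1 C
  have hU0'K' : ∀ x : ↥U1, x ∈ U0' → x ∈ K' → x = 0 := by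
    intro x hx hxK
    have : (x : U) = 0 := hU0K x hx hxK
    exact Subtype.ext this
  -- C ⊓ K' = ⊥ (elementwise)
  have hCK : ∀ x : ↥U1, x ∈ C → x ∈ K' → x = 0 := by
    intro x hx hxK
    obtain ⟨a, ha, d, hd, rfl⟩ := Submodule.mem_sup.mp hx
    have hdm : d ∈ U0' ⊔ K' := by
      have : d = a + d - a := by abel
      rw [this]
      exact Submodule.sub_mem _ (Submodule.mem_sup_right hxK) (Submodule.mem_sup_left ha)
    have hd0 : d = 0 := by
      have := hD.disjoint.eq_bot ▸ Submodule.mem_inf.mpr ⟨hdm, hd⟩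
      simpa using (hD.disjoint.le_bot (Submodule.mem_inf.mpr ⟨hdm, hd⟩) : d ∈ (⊥ : Submodule ℂ ↥U1))
    rw [hd0, add_zero] at hxK ⊢
    exact hU0'K' a ha hxK
  -- C ⊔ K' = ⊤
  have hCKtop : C ⊔ K' = ⊤ := by
    rw [hCdef, sup_assoc, sup_comm D K', ← sup_assoc]
    exact hD.codisjoint.eq_top
  refine ⟨Uf, Wf, ?_, hW0Wf, ?_, hWfFD, ?_, ?_⟩
  · -- U0 ≤ Uf
    intro u hu
    refine ⟨⟨u, hU0U1 hu⟩, Submodule.mem_sup_left (by simpa [hU0'def] using hu), rfl⟩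
  · exact Submodule.finiteDimensional_of_le hUfle
  · -- left nondegeneracy on Uf
    intro u hu h0
    obtain ⟨x, hx, rfl⟩ := hu
    have hxK : x ∈ K' := by
      refine Submodule.mem_comap.mpr ⟨x.2, ?_⟩
      rw [SetLike.mem_coe, memK_iff]
      exact fun w hw => h0 w hw
    have := hCK x hx hxK
    rw [this]; rfl
  · -- right nondegeneracy
    intro w hw h0
    refine hright1 w hw ?_
    intro u hu
    have hx : (⟨u, hu⟩ : ↥U1) ∈ C ⊔ K' := by rw [hCKtop]; trivial
    obtain ⟨c, hc, k, hk, hck⟩ := Submodule.mem_sup.mp hx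
    have hcu : B (c : U) w = 0 := h0 (c : U) ⟨c, hc, rfl⟩
    have hku : B (k : U) w = 0 := hKkills (k : U) hk w hw
    have : u = (c : U) + (k : U) := by
      have := congrArg (Subtype.val) hck
      simpa using this.symm
    rw [this, map_add]
    simp [LinearMap.add_apply, hcu, hku]
end

section
/- Let (U, W, B) be a linear system over ℂ with 2 ≤ Module.rank ℂ U. Then the Lie algebra sl_{U,W} := ι(ker T) is a simple Lie algebra: it is non-abelian and its only Lie ideals are the zero ideal and the whole algebra. -/
open TensorProduct

attribute [local instance 100] LieRing.ofAssociativeRing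

variable {U W : Type*} [AddCommGroup U] [Module ℂ U] [AddCommGroup W] [Module ℂ W]

/-- The linear map `ι : U ⊗ W → End ℂ U` determined by `ι(u ⊗ w)(x) = B x w • u`. -/
noncomputable def iotaMap (B : U →ₗ[ℂ] W →ₗ[ℂ] ℂ) :
    U ⊗[ℂ] W →ₗ[ℂ] Module.End ℂ U :=
  (dualTensorHom ℂ U U).comp ((TensorProduct.map B.flip LinearMap.id).comp
    (TensorProduct.comm ℂ U W).toLinearMap)

/-- The defining property of `iotaMap`. -/
theorem iotaMap_apply (B : U →ₗ[ℂ] W →ₗ[ℂ] ℂ) (u x : U) (w : W) :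
    iotaMap B (u ⊗ₜ w) x = B x w • u := by
  simp [iotaMap]

/-- The linear map `T : U ⊗ W → ℂ` determined by `T(u ⊗ w) = B u w`. -/
noncomputable def Tmap (B : U →ₗ[ℂ] W →ₗ[ℂ] ℂ) : U ⊗[ℂ] W →ₗ[ℂ] ℂ :=
  TensorProduct.lift B

theorem Tmap_apply (B : U →ₗ[ℂ] W →ₗ[ℂ] ℂ) (u : U) (w : W) :
    Tmap B (u ⊗ₜ w) = B u w := rfl

theorem bracket_mem (B : U →ₗ[ℂ] W →ₗ[ℂ] ℂ) (s t : U ⊗[ℂ] W) :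
    ⁅iotaMap B s, iotaMap B t⁆ ∈ Submodule.map (iotaMap B) (LinearMap.ker (Tmap B)) := by
  induction s using TensorProduct.induction_on with
  | zero => simp
  | tmul u w =>
    induction t using TensorProduct.induction_on with
    | zero => simp
    | tmul u' w' =>
      refine ⟨B u' w • u ⊗ₜ w' - B u w' • u' ⊗ₜ w, ?_, ?_⟩
      · simp only [SetLike.mem_coe, LinearMap.mem_ker, map_sub, map_smul, Tmap_apply,
          smul_eq_mul]
        ring
      · ext x
        rw [Ring.lie_def]
        simp only [map_sub, map_smul, LinearMap.sub_apply, LinearMap.smul_apply,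
          Module.End.mul_apply, iotaMap_apply, map_smul, smul_eq_mul]
        module
    | add a b ha hb =>
      rw [map_add, lie_add]
      exact Submodule.add_mem _ ha hb
  | add a b ha hb =>
    rw [map_add, add_lie]
    exact Submodule.add_mem _ ha hb

/-- The Lie algebra `sl_{U,W} = ι(ker T)`, a Lie subalgebra of `End ℂ U`. -/
noncomputable def slSub (B : U →ₗ[ℂ] W →ₗ[ℂ] ℂ) :
    LieSubalgebra ℂ (Module.End ℂ U) :=
  { Submodule.map (iotaMap B) (LinearMap.ker (Tmap B)) with
    lie_mem' := by
      intro x y hx hy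
      obtain ⟨s, -, rfl⟩ := hx
      obtain ⟨t, -, rfl⟩ := hy
      exact bracket_mem B s t }

/-! ### Auxiliary definitions and lemmas -/

/-- The rank one operator `x ↦ B x w • u`. -/
noncomputable def Emap (B : U →ₗ[ℂ] W →ₗ[ℂ] ℂ) (u : U) (w : W) : Module.End ℂ U :=
  iotaMap B (u ⊗ₜ w)

theorem Emap_apply (B : U →ₗ[ℂ] W →ₗ[ℂ] ℂ) (u x : U) (w : W) :
    Emap B u w x = B x w • u := iotaMap_apply B u x w

theorem Emap_mem (B : U →ₗ[ℂ] W →ₗ[ℂ] ℂ) {u : U} {w : W} (h : B u w = 0) :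
    Emap B u w ∈ slSub B :=
  ⟨u ⊗ₜ w, by simp [LinearMap.mem_ker, Tmap_apply, h], rfl⟩

theorem lie_Emap_Emap (B : U →ₗ[ℂ] W →ₗ[ℂ] ℂ) (a c : U) (b d : W) :
    ⁅Emap B a b, Emap B c d⁆ = B c b • Emap B a d - B a d • Emap B c b := by
  ext x
  rw [Ring.lie_def]
  simp only [LinearMap.sub_apply, LinearMap.smul_apply, Module.End.mul_apply, Emap_apply,
    map_smul, smul_eq_mul]
  module

theorem double_bracket (B : U →ₗ[ℂ] W →ₗ[ℂ] ℂ) (u : U) (w : W) (huw : B u w = 0)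
    (x : Module.End ℂ U) :
    ⁅Emap B u w, ⁅Emap B u w, x⁆⁆ = (-2 * B (x u) w) • Emap B u w := by
  ext y
  rw [Ring.lie_def, Ring.lie_def]
  simp only [LinearMap.sub_apply, LinearMap.smul_apply, Module.End.mul_apply, map_sub,
    Emap_apply, map_smul, smul_eq_mul, huw]
  module

theorem sepU {B : U →ₗ[ℂ] W →ₗ[ℂ] ℂ} (hB1 : ∀ u : U, (∀ w : W, B u w = 0) → u = 0)
    (u p : U) (hp : p ≠ 0) :
    (∃ b : W, B u b = 0 ∧ B p b ≠ 0) ∨ ∃ c : ℂ, c ≠ 0 ∧ p = c • u := by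
  by_cases h : ∃ b : W, B u b = 0 ∧ B p b ≠ 0
  · exact Or.inl h
  push_neg at h
  right
  by_cases hu : ∀ b, B u b = 0
  · exact absurd (hB1 p (fun b => h b (hu b))) hp
  push_neg at hu
  obtain ⟨b₀, hb₀⟩ := hu
  set b₁ := (B u b₀)⁻¹ • b₀ with hb₁
  have hub₁ : B u b₁ = 1 := by simp [hb₁, inv_mul_cancel₀ hb₀]
  set c := B p b₁ with hc
  have key : ∀ b, B p b = c * B u b := by
    intro b
    have h0 : B u (b - B u b • b₁) = 0 := by simp [hub₁]
    have h1 := h _ h0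
    simp only [map_sub, map_smul, smul_eq_mul, hub₁, mul_one, sub_eq_zero] at h1
    rw [h1]; ring
  have hpc : p = c • u := by
    rw [← sub_eq_zero]
    apply hB1
    intro b
    simp [key b, mul_comm]
  refine ⟨c, fun hc0 => hp ?_, hpc⟩
  rw [hpc, hc0, zero_smul]

theorem sepW {B : U →ₗ[ℂ] W →ₗ[ℂ] ℂ} (hB2 : ∀ w : W, (∀ u : U, B u w = 0) → w = 0)
    (w q : W) (hq : q ≠ 0) :
    (∃ a : U, B a w = 0 ∧ B a q ≠ 0) ∨ ∃ c : ℂ, c ≠ 0 ∧ q = c • w := by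
  by_cases h : ∃ a : U, B a w = 0 ∧ B a q ≠ 0
  · exact Or.inl h
  push_neg at h
  right
  by_cases hw : ∀ a, B a w = 0
  · exact absurd (hB2 q (fun a => h a (hw a))) hq
  push_neg at hw
  obtain ⟨a₀, ha₀⟩ := hw
  set a₁ := (B a₀ w)⁻¹ • a₀ with ha₁
  have haw : B a₁ w = 1 := by simp [ha₁, inv_mul_cancel₀ ha₀]
  set c := B a₁ q with hc
  have key : ∀ a, B a q = c * B a w := by
    intro a
    have h0 : B (a - B a w • a₁) w = 0 := by simp [haw]
    have h1 := h _ h0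
    simp only [map_sub, map_smul, LinearMap.sub_apply, LinearMap.smul_apply, smul_eq_mul,
      haw, mul_one, sub_eq_zero] at h1
    rw [h1]; ring
  have hqc : q = c • w := by
    rw [← sub_eq_zero]
    apply hB2
    intro a
    simp [key a, mul_comm]
  refine ⟨c, fun hc0 => hq ?_, hqc⟩
  rw [hqc, hc0, zero_smul]

/-- An operator that preserves the annihilator structure of `B` is scalar. -/
theorem scalar_of_compat {B : U →ₗ[ℂ] W →ₗ[ℂ] ℂ}
    (hB1 : ∀ u : U, (∀ w : W, B u w = 0) → u = 0)
    (hU : ∃ u : U, u ≠ 0) (x : Module.End ℂ U)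
    (h : ∀ (u : U) (w : W), B u w = 0 → B (x u) w = 0) : ∃ c : ℂ, x = c • 1 := by
  have hdiag : ∀ u : U, ∃ c : ℂ, x u = c • u := by
    intro u
    by_cases hxu : x u = 0
    · exact ⟨0, by simp [hxu]⟩
    rcases sepU hB1 u (x u) hxu with ⟨b, h1, h2⟩ | ⟨c, -, hc⟩
    · exact absurd (h u b h1) h2
    · exact ⟨c, hc⟩
  obtain ⟨u₀, hu₀⟩ := hU
  obtain ⟨c₀, hc₀⟩ := hdiag u₀
  refine ⟨c₀, ?_⟩
  ext v
  rw [LinearMap.smul_apply, Module.End.one_apply]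
  by_cases hv : v = 0
  · simp [hv]
  obtain ⟨cv, hcv⟩ := hdiag v
  obtain ⟨cs, hcs⟩ := hdiag (u₀ + v)
  have hsum : (c₀ - cs) • u₀ + (cv - cs) • v = 0 := by
    have h' : c₀ • u₀ + cv • v = cs • u₀ + cs • v := by
      rw [← hc₀, ← hcv, ← smul_add, ← hcs, map_add]
    linear_combination (norm := module) h'
  rcases sepU hB1 v u₀ hu₀ with ⟨b, hb1, hb2⟩ | ⟨a, ha, hav⟩
  · have h1 : (c₀ - cs) * B u₀ b = 0 := by
      have h2 := congrArg (fun z => B z b) hsum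
      simpa [hb1] using h2
    have hcs0 : cs = c₀ := by
      rcases mul_eq_zero.mp h1 with h' | h'
      · linear_combination -h'
      · exact absurd h' hb2
    rcases sepU hB1 u₀ v hv with ⟨b', hb1', hb2'⟩ | ⟨a, ha, hav⟩
    · have h2 : (cv - cs) * B v b' = 0 := by
        have h3 := congrArg (fun z => B z b') hsum
        simpa [hb1'] using h3
      have hcv0 : cv = cs := by
        rcases mul_eq_zero.mp h2 with h' | h'
        · linear_combination h'
        · exact absurd h' hb2'
      rw [hcv, hcv0, hcs0]
    · rw [hav, map_smul, hc₀, smul_smul, smul_smul, mul_comm c₀ a]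
  · have hveq : v = a⁻¹ • u₀ := by rw [hav, smul_smul, inv_mul_cancel₀ ha, one_smul]
    rw [hveq, map_smul, hc₀, smul_smul, smul_smul, mul_comm c₀ a⁻¹]

theorem range_fg (B : U →ₗ[ℂ] W →ₗ[ℂ] ℂ) (t : U ⊗[ℂ] W) :
    ∃ F : Submodule ℂ U, F.FG ∧ ∀ x : U, iotaMap B t x ∈ F := by
  induction t using TensorProduct.induction_on with
  | zero => exact ⟨⊥, Submodule.fg_bot, by simp⟩
  | tmul u w =>
    refine ⟨Submodule.span ℂ {u}, Submodule.fg_span_singleton u, fun x => ?_⟩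
    rw [iotaMap_apply]
    exact Submodule.smul_mem _ _ (Submodule.mem_span_singleton_self u)
  | add a b ha hb =>
    obtain ⟨F1, h1, h1'⟩ := ha
    obtain ⟨F2, h2, h2'⟩ := hb
    exact ⟨F1 ⊔ F2, Submodule.FG.sup h1 h2, fun x => by
      rw [map_add]
      exact Submodule.add_mem _ (Submodule.mem_sup_left (h1' x))
        (Submodule.mem_sup_right (h2' x))⟩

theorem trace_iota (B : U →ₗ[ℂ] W →ₗ[ℂ] ℂ) [Module.Finite ℂ U] (t : U ⊗[ℂ] W) :
    LinearMap.trace ℂ U (iotaMap B t) = Tmap B t := by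
  induction t using TensorProduct.induction_on with
  | zero => simp
  | tmul u w =>
    have h : iotaMap B (u ⊗ₜ w) = dualTensorHom ℂ U U ((B.flip w) ⊗ₜ u) := by
      simp [iotaMap]
    rw [h, LinearMap.trace_eq_contract_apply, contractLeft_apply]
    rfl
  | add a b ha hb => simp [map_add, ha, hb]

theorem not_scalar (B : U →ₗ[ℂ] W →ₗ[ℂ] ℂ) (hrank : 2 ≤ Module.rank ℂ U)
    (t : U ⊗[ℂ] W) (ht : Tmap B t = 0)
    (c : ℂ) (hc : c ≠ 0) : iotaMap B t ≠ c • 1 := by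
  intro heq
  obtain ⟨F, hFG, hF⟩ := range_fg B t
  have hFtop : F = ⊤ := by
    rw [eq_top_iff]
    intro x _
    have hx := hF x
    rw [heq] at hx
    have h2 := Submodule.smul_mem F c⁻¹ hx
    simpa [smul_smul, inv_mul_cancel₀ hc] using h2
  have : Module.Finite ℂ U := Module.finite_def.mpr (hFtop ▸ hFG)
  have htr : LinearMap.trace ℂ U (iotaMap B t) = 0 := by rw [trace_iota B t, ht]
  rw [heq] at htr
  simp only [map_smul, LinearMap.trace_one, smul_eq_mul] at htr
  have hnt : Nontrivial U := rank_pos_iff_nontrivial.mp (lt_of_lt_of_le (by norm_num) hrank)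
  have hfr : (Module.finrank ℂ U : ℂ) ≠ 0 := by
    exact_mod_cast Nat.cast_ne_zero.mpr Module.finrank_pos.ne'
  rcases mul_eq_zero.mp htr with h | h
  · exact hc h
  · exact hfr h

/-- The span of the `B`-isotropic pure tensors. -/
noncomputable def isoSpan (B : U →ₗ[ℂ] W →ₗ[ℂ] ℂ) : Submodule ℂ (U ⊗[ℂ] W) :=
  Submodule.span ℂ {t : U ⊗[ℂ] W | ∃ u w, B u w = 0 ∧ t = u ⊗ₜ w}

theorem tmul_mem_isoSpan (B : U →ₗ[ℂ] W →ₗ[ℂ] ℂ) {u : U} {w : W} (h : B u w = 0) :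
    u ⊗ₜ w ∈ isoSpan B :=
  Submodule.subset_span ⟨u, w, h, rfl⟩

theorem lemX (B : U →ₗ[ℂ] W →ₗ[ℂ] ℂ) (p r : U) (q s : W)
    (h1 : B p s = 0) (h2 : B r q = 0) (h3 : B p q = B r s) :
    p ⊗ₜ q - r ⊗ₜ s ∈ isoSpan B := by
  have e : p ⊗ₜ[ℂ] q - r ⊗ₜ[ℂ] s = (p + r) ⊗ₜ[ℂ] (q - s) + p ⊗ₜ[ℂ] s - r ⊗ₜ[ℂ] q := by
    rw [add_tmul, tmul_sub, tmul_sub]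
    abel
  rw [e]
  refine sub_mem (add_mem ?_ (tmul_mem_isoSpan B h1)) (tmul_mem_isoSpan B h2)
  refine tmul_mem_isoSpan B ?_
  simp only [map_add, map_sub, LinearMap.add_apply, LinearMap.sub_apply]
  rw [h1, h2, h3]
  ring

theorem lemY (B : U →ₗ[ℂ] W →ₗ[ℂ] ℂ) (u₁ : U) (w₁ : W) (h11 : B u₁ w₁ = 1) (u : U) (w : W) :
    u ⊗ₜ w - B u w • u₁ ⊗ₜ w₁ ∈ isoSpan B := by
  set a := B u w₁ with ha
  set b := B u₁ w with hb
  set u' := u - a • u₁ with hu'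
  set w' := w - b • w₁ with hw'
  have hu'w₁ : B u' w₁ = 0 := by simp [hu', ha, h11]
  have hu₁w' : B u₁ w' = 0 := by simp [hw', hb, h11]
  set d := B u' w' with hd
  have hmain : u' ⊗ₜ w' - (d • u₁) ⊗ₜ w₁ ∈ isoSpan B := by
    apply lemX B u' (d • u₁) w' w₁ hu'w₁
    · simp [hu₁w']
    · simp [← hd, h11]
  have hBuw : B u w = d + a * b := by
    have : u = u' + a • u₁ := by rw [hu']; abel
    have h2 : w = w' + b • w₁ := by rw [hw']; abel
    rw [this, h2]
    simp only [map_add, map_smul, LinearMap.add_apply, LinearMap.smul_apply, smul_eq_mul]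
    rw [hu'w₁, hu₁w', h11, ← hd]
    ring
  have hu2 : u = u' + a • u₁ := by rw [hu']; abel
  have hw2 : w = w' + b • w₁ := by rw [hw']; abel
  have e : (u' + a • u₁) ⊗ₜ[ℂ] (w' + b • w₁) - (d + a * b) • u₁ ⊗ₜ[ℂ] w₁ =
      (u' ⊗ₜ w' - (d • u₁) ⊗ₜ w₁) + b • (u' ⊗ₜ w₁) + a • (u₁ ⊗ₜ w') := by
    simp only [add_tmul, tmul_add, tmul_smul, smul_tmul', smul_smul, add_smul, smul_add]
    rw [mul_comm b a]
    abel
  rw [hBuw, hu2, hw2, e]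
  exact add_mem (add_mem hmain (Submodule.smul_mem _ _ (tmul_mem_isoSpan B hu'w₁)))
    (Submodule.smul_mem _ _ (tmul_mem_isoSpan B hu₁w'))

theorem ker_le_isoSpan (B : U →ₗ[ℂ] W →ₗ[ℂ] ℂ) (u₁ : U) (w₁ : W) (h11 : B u₁ w₁ = 1)
    {t : U ⊗[ℂ] W} (ht : Tmap B t = 0) : t ∈ isoSpan B := by
  set π := (isoSpan B).mkQ with hπ
  have key : ∀ s : U ⊗[ℂ] W, π s = Tmap B s • π (u₁ ⊗ₜ w₁) := by
    intro s
    induction s using TensorProduct.induction_on with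
    | zero => simp
    | tmul u w =>
      have h0 : π (u ⊗ₜ w - B u w • u₁ ⊗ₜ w₁) = 0 :=
        (Submodule.Quotient.mk_eq_zero _).mpr (lemY B u₁ w₁ h11 u w)
      rw [map_sub, map_smul, sub_eq_zero] at h0
      rw [h0, Tmap_apply]
    | add a b ha hb => rw [map_add, map_add, ha, hb, add_smul]
  have := key t
  rw [ht, zero_smul] at this
  exact (Submodule.Quotient.mk_eq_zero _).mp this

/-- Existence of a `δ`-system from nondegeneracy and rank at least two. -/
theorem delta_system (B : U →ₗ[ℂ] W →ₗ[ℂ] ℂ)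
    (hB1 : ∀ u : U, (∀ w : W, B u w = 0) → u = 0)
    (hrank : 2 ≤ Module.rank ℂ U) :
    ∃ (u₁ u₂ : U) (w₁ w₂ : W), B u₁ w₁ = 1 ∧ B u₂ w₂ = 1 ∧ B u₁ w₂ = 0 ∧ B u₂ w₁ = 0 ∧
      u₁ ≠ 0 ∧ u₂ ≠ 0 := by
  have hex : ∀ u : U, u ≠ 0 → ∃ w, B u w ≠ 0 := by
    intro u hu
    by_contra h
    push_neg at h
    exact hu (hB1 u fun w => h w)
  have hnot : ¬ Module.rank ℂ U ≤ 1 := by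
    intro h
    exact absurd (le_trans hrank h) (by norm_num)
  rw [rank_le_one_iff] at hnot
  push_neg at hnot
  -- get a nonzero vector
  obtain ⟨v, hv⟩ := hnot 0
  have hv0 : v ≠ 0 := fun h => hv 0 (by simp [h])
  obtain ⟨v', hv'⟩ := hnot v
  obtain ⟨w₁', hw₁'⟩ := hex v hv0
  set w₁ := (B v w₁')⁻¹ • w₁' with hw₁
  have h11 : B v w₁ = 1 := by simp [hw₁, inv_mul_cancel₀ hw₁']
  set u₂ := v' - B v' w₁ • v with hu₂
  have hu₂0 : u₂ ≠ 0 := by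
    intro h
    rw [hu₂, sub_eq_zero] at h
    exact hv' (B v' w₁) h.symm
  have h21 : B u₂ w₁ = 0 := by simp [hu₂, h11]
  obtain ⟨w₂'', hw₂''⟩ := hex u₂ hu₂0
  set w₂' := (B u₂ w₂'')⁻¹ • w₂'' with hw₂'
  have h22' : B u₂ w₂' = 1 := by simp [hw₂', inv_mul_cancel₀ hw₂'']
  set w₂ := w₂' - B v w₂' • w₁ with hw₂
  have h12 : B v w₂ = 0 := by simp [hw₂, h11]
  have h22 : B u₂ w₂ = 1 := by simp [hw₂, h22', h21]
  exact ⟨v, u₂, w₁, w₂, h11, h22, h12, h21, hv0, hu₂0⟩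

theorem moveM1 (B : U →ₗ[ℂ] W →ₗ[ℂ] ℂ)
    (hB2 : ∀ w : W, (∀ u : U, B u w = 0) → w = 0)
    (J : Submodule ℂ (Module.End ℂ U))
    (hJlie : ∀ y : Module.End ℂ U, y ∈ slSub B → ∀ z ∈ J, ⁅y, z⁆ ∈ J)
    {p : U} {q : W} (hq : q ≠ 0) (hJpq : Emap B p q ∈ J)
    {w : W} (hpw : B p w = 0) : Emap B p w ∈ J := by
  rcases sepW hB2 w q hq with ⟨a, ha1, ha2⟩ | ⟨c, hc, hcq⟩
  · have hb := hJlie (Emap B a w) (Emap_mem B ha1) _ hJpq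
    rw [lie_Emap_Emap, hpw, zero_smul, zero_sub] at hb
    have hb2 := J.neg_mem hb
    rw [neg_neg] at hb2
    have hb3 := J.smul_mem (B a q)⁻¹ hb2
    rwa [smul_smul, inv_mul_cancel₀ ha2, one_smul] at hb3
  · have hw : w = c⁻¹ • q := by rw [hcq, smul_smul, inv_mul_cancel₀ hc, one_smul]
    have he : Emap B p w = c⁻¹ • Emap B p q := by
      rw [hw]
      show iotaMap B (p ⊗ₜ (c⁻¹ • q)) = c⁻¹ • iotaMap B (p ⊗ₜ q)
      rw [tmul_smul, map_smul]
    rw [he]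
    exact J.smul_mem _ hJpq

theorem moveM2 (B : U →ₗ[ℂ] W →ₗ[ℂ] ℂ)
    (hB1 : ∀ u : U, (∀ w : W, B u w = 0) → u = 0)
    (J : Submodule ℂ (Module.End ℂ U))
    (hJlie : ∀ y : Module.End ℂ U, y ∈ slSub B → ∀ z ∈ J, ⁅y, z⁆ ∈ J)
    {p : U} {q : W} (hp : p ≠ 0) (hJpq : Emap B p q ∈ J)
    {u : U} (huq : B u q = 0) : Emap B u q ∈ J := by
  rcases sepU hB1 u p hp with ⟨b, hb1, hb2⟩ | ⟨c, hc, hcp⟩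
  · have hb := hJlie (Emap B u b) (Emap_mem B hb1) _ hJpq
    rw [lie_Emap_Emap, huq, zero_smul, sub_zero] at hb
    have hb3 := J.smul_mem (B p b)⁻¹ hb
    rwa [smul_smul, inv_mul_cancel₀ hb2, one_smul] at hb3
  · have hu : u = c⁻¹ • p := by rw [hcp, smul_smul, inv_mul_cancel₀ hc, one_smul]
    have he : Emap B u q = c⁻¹ • Emap B p q := by
      rw [hu]
      show iotaMap B ((c⁻¹ • p) ⊗ₜ q) = c⁻¹ • iotaMap B (p ⊗ₜ q)
      rw [← smul_tmul', map_smul]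
    rw [he]
    exact J.smul_mem _ hJpq

theorem moveM3 (B : U →ₗ[ℂ] W →ₗ[ℂ] ℂ)
    (J : Submodule ℂ (Module.End ℂ U))
    (hJlie : ∀ y : Module.End ℂ U, y ∈ slSub B → ∀ z ∈ J, ⁅y, z⁆ ∈ J)
    {p : U} {q : W} (hJpq : Emap B p q ∈ J)
    {u : U} {w : W} (huw : B u w = 0) (hc : B u q ≠ 0) (hd : B p w ≠ 0) :
    Emap B u w ∈ J := by
  have h2 := hJlie _ (Emap_mem B huw) _ (hJlie _ (Emap_mem B huw) _ hJpq)
  rw [double_bracket B u w huw] at h2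
  simp only [Emap_apply, map_smul, LinearMap.smul_apply, smul_eq_mul] at h2
  have he : -2 * (B u q * B p w) ≠ 0 := by
    simp only [ne_eq, mul_eq_zero]
    push_neg
    exact ⟨by norm_num, hc, hd⟩
  have h3 := J.smul_mem (-2 * (B u q * B p w))⁻¹ h2
  rwa [smul_smul, inv_mul_cancel₀ he, one_smul] at h3

theorem allE_mem (B : U →ₗ[ℂ] W →ₗ[ℂ] ℂ)
    (hB1 : ∀ u : U, (∀ w : W, B u w = 0) → u = 0)
    (hB2 : ∀ w : W, (∀ u : U, B u w = 0) → w = 0)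
    (J : Submodule ℂ (Module.End ℂ U))
    (hJlie : ∀ y : Module.End ℂ U, y ∈ slSub B → ∀ z ∈ J, ⁅y, z⁆ ∈ J)
    {u₀ : U} {w₀ : W} (hu₀ : u₀ ≠ 0) (hw₀ : w₀ ≠ 0) (hJ0 : Emap B u₀ w₀ ∈ J)
    (u : U) (w : W) (huw : B u w = 0) : Emap B u w ∈ J := by
  by_cases hu : u = 0
  · have : Emap B u w = 0 := by
      rw [hu]
      show iotaMap B ((0 : U) ⊗ₜ w) = 0
      rw [zero_tmul, map_zero]
    rw [this]; exact J.zero_mem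
  by_cases hw : w = 0
  · have : Emap B u w = 0 := by
      rw [hw]
      show iotaMap B (u ⊗ₜ (0 : W)) = 0
      rw [tmul_zero, map_zero]
    rw [this]; exact J.zero_mem
  by_cases hc : B u w₀ = 0
  · exact moveM1 B hB2 J hJlie hw₀ (moveM2 B hB1 J hJlie hu₀ hJ0 hc) huw
  by_cases hd : B u₀ w = 0
  · exact moveM2 B hB1 J hJlie hu₀ (moveM1 B hB2 J hJlie hw₀ hJ0 hd) huw
  · exact moveM3 B J hJlie hJ0 huw hc hd

/-- For a linear system `(U, W, B)` with `2 ≤ dim U`, the Lie algebra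
`sl_{U,W} = ι(ker T)` is closed under the commutator bracket and is a simple Lie
algebra: it is non-abelian and its only Lie ideals are `⊥` and `⊤`. -/
theorem stmt_2 (B : U →ₗ[ℂ] W →ₗ[ℂ] ℂ)
    (hB1 : ∀ u : U, (∀ w : W, B u w = 0) → u = 0)
    (hB2 : ∀ w : W, (∀ u : U, B u w = 0) → w = 0)
    (hrank : 2 ≤ Module.rank ℂ U) :
    LieAlgebra.IsSimple ℂ ↥(slSub B) := by
  obtain ⟨u₁, u₂, w₁, w₂, h11, h22, h12, h21, hu₁, hu₂⟩ := delta_system B hB1 hrank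
  constructor
  · -- every ideal is ⊥ or ⊤
    intro I
    by_cases hI : I = ⊥
    · exact Or.inl hI
    right
    -- the image of I in End ℂ U
    set J : Submodule ℂ (Module.End ℂ U) :=
      Submodule.map ((slSub B : Submodule ℂ (Module.End ℂ U)).subtype)
        (I : Submodule ℂ ↥(slSub B)) with hJdef
    have hJlie : ∀ y : Module.End ℂ U, y ∈ slSub B → ∀ z ∈ J, ⁅y, z⁆ ∈ J := by
      intro y hy z hz
      obtain ⟨m, hm, rfl⟩ := hz
      exact ⟨⁅(⟨y, hy⟩ : ↥(slSub B)), m⁆, I.lie_mem hm, rfl⟩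
    have hJ1 : ∀ z ∈ J, z ∈ slSub B := by
      rintro z ⟨m, hm, rfl⟩
      exact m.property
    -- a nonzero element of J
    obtain ⟨m₀, hm₀I, hm₀⟩ : ∃ m : ↥(slSub B), m ∈ I ∧ m ≠ 0 := by
      by_contra hcon
      push_neg at hcon
      exact hI (LieSubmodule.eq_bot_iff I |>.mpr hcon)
    set x : Module.End ℂ U := (m₀ : Module.End ℂ U) with hxdef
    have hxJ : x ∈ J := ⟨m₀, hm₀I, rfl⟩
    have hx0 : x ≠ 0 := fun h => hm₀ (Subtype.ext h)
    -- find an isotropic rank one element of J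
    have hexE : ∃ (u : U) (w : W), B u w = 0 ∧ B (x u) w ≠ 0 := by
      by_contra hcon
      push_neg at hcon
      obtain ⟨c, hc⟩ := scalar_of_compat hB1 ⟨u₁, hu₁⟩ x hcon
      obtain ⟨t, ht, hxt⟩ := hJ1 x hxJ
      have hc0 : c ≠ 0 := by
        rintro rfl
        rw [zero_smul] at hc
        exact hx0 hc
      exact not_scalar B hrank t ht c hc0 (by rw [hxt, hc])
    obtain ⟨u, w, huw, hxuw⟩ := hexE
    have hu0 : u ≠ 0 := by
      rintro rfl
      rw [map_zero, map_zero, LinearMap.zero_apply] at hxuw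
      exact hxuw rfl
    have hw0 : w ≠ 0 := by
      rintro rfl
      rw [map_zero] at hxuw
      exact hxuw rfl
    have hnJ : Emap B u w ∈ J := by
      have h2 := hJlie _ (Emap_mem B huw) _ (hJlie _ (Emap_mem B huw) _ hxJ)
      rw [double_bracket B u w huw] at h2
      have he : -2 * B (x u) w ≠ 0 := by
        simp only [ne_eq, mul_eq_zero]
        push_neg
        exact ⟨by norm_num, hxuw⟩
      have h3 := J.smul_mem (-2 * B (x u) w)⁻¹ h2
      rwa [smul_smul, inv_mul_cancel₀ he, one_smul] at h3
    have hallE : ∀ (u' : U) (w' : W), B u' w' = 0 → Emap B u' w' ∈ J :=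
      allE_mem B hB1 hB2 J hJlie hu0 hw0 hnJ
    -- conclude I = ⊤
    rw [← LieSubmodule.toSubmodule_eq_top, Submodule.eq_top_iff']
    rintro ⟨y, hy⟩
    obtain ⟨t, ht, hyt⟩ := id hy
    have hyJ : y ∈ J := by
      have hSle : isoSpan B ≤ J.comap (iotaMap B) := by
        rw [isoSpan, Submodule.span_le]
        rintro s ⟨u', w', h', rfl⟩
        exact hallE u' w' h'
      have hmem := hSle (ker_le_isoSpan B u₁ w₁ h11 ht)
      rw [Submodule.mem_comap] at hmem
      rwa [hyt] at hmem
    obtain ⟨m', hm', hmy⟩ := hyJ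
    have hms : m' = ⟨y, hy⟩ := Subtype.ext hmy
    rw [← hms]
    exact hm'
  · -- non-abelian
    intro hab
    have h := hab.trivial ⟨Emap B u₁ w₂, Emap_mem B h12⟩ ⟨Emap B u₂ w₁, Emap_mem B h21⟩
    have h2 : ⁅Emap B u₁ w₂, Emap B u₂ w₁⁆ = 0 := by
      have := congrArg (Subtype.val) h
      rwa [LieSubalgebra.coe_bracket] at this
    rw [lie_Emap_Emap, h22, h11, one_smul, one_smul] at h2
    have h3 := congrArg (fun f : Module.End ℂ U => f u₁) h2
    simp only [LinearMap.sub_apply, Emap_apply, h11, h12, one_smul, zero_smul,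
      LinearMap.zero_apply, sub_zero] at h3
    exact hu₁ h3
end

section
/- Let (U, W, B) be a linear system over ℂ. Then the commutator ideal ⁅gl_{U,W}, gl_{U,W}⁆ (the span of all commutators φψ − ψφ with φ, ψ in the range of ι) equals sl_{U,W} = ι(ker T) as subspaces of End_ℂ(U). -/
open TensorProduct

variable {U W : Type*} [AddCommGroup U] [Module ℂ U] [AddCommGroup W] [Module ℂ W]

theorem iota_mul (B : U →ₗ[ℂ] W →ₗ[ℂ] ℂ) (s t : U ⊗[ℂ] W) :
    iotaMap B s * iotaMap B t = iotaMap B (LinearMap.rTensor W (iotaMap B s) t) := by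
  induction t using TensorProduct.induction_on with
  | zero => simp
  | tmul u' w' =>
      ext x
      simp [Module.End.mul_apply, iotaMap_apply, LinearMap.rTensor_tmul, map_smul]
  | add a b ha hb =>
      simp [map_add, mul_add, ha, hb]

theorem T_rTensor_symm (B : U →ₗ[ℂ] W →ₗ[ℂ] ℂ) (s t : U ⊗[ℂ] W) :
    Tmap B (LinearMap.rTensor W (iotaMap B s) t)
      = Tmap B (LinearMap.rTensor W (iotaMap B t) s) := by
  induction s using TensorProduct.induction_on with
  | zero => simp
  | tmul u w =>
      induction t using TensorProduct.induction_on with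
      | zero => simp
      | tmul u' w' =>
          simp [LinearMap.rTensor_tmul, iotaMap_apply, Tmap_apply, smul_tmul',
            mul_comm]
      | add a b ha hb => simp [map_add, ha, hb]
  | add a b ha hb => simp [map_add, ha, hb]

/-- For a linear system `(U, W, B)`, the commutator ideal `⁅gl_{U,W}, gl_{U,W}⁆`
(the span of all commutators of elements in the range of `ι`) equals
`sl_{U,W} = ι(ker T)` as subspaces of `End ℂ U`. -/
theorem stmt_3 (B : U →ₗ[ℂ] W →ₗ[ℂ] ℂ)
    (hB1 : ∀ u : U, (∀ w : W, B u w = 0) → u = 0)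
    (hB2 : ∀ w : W, (∀ u : U, B u w = 0) → w = 0) :
    Submodule.span ℂ {x : Module.End ℂ U |
        ∃ φ ∈ LinearMap.range (iotaMap B), ∃ ψ ∈ LinearMap.range (iotaMap B),
          x = φ * ψ - ψ * φ}
      = Submodule.map (iotaMap B) (LinearMap.ker (Tmap B)) := by
  set S : Set (Module.End ℂ U) := {x : Module.End ℂ U |
        ∃ φ ∈ LinearMap.range (iotaMap B), ∃ ψ ∈ LinearMap.range (iotaMap B),
          x = φ * ψ - ψ * φ} with hS
  apply le_antisymm
  · rw [Submodule.span_le]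
    rintro x ⟨φ, ⟨s, rfl⟩, ψ, ⟨t, rfl⟩, rfl⟩
    refine ⟨LinearMap.rTensor W (iotaMap B s) t - LinearMap.rTensor W (iotaMap B t) s,
      ?_, ?_⟩
    · simp [LinearMap.mem_ker, map_sub, T_rTensor_symm B s t]
    · simp [map_sub, ← iota_mul]
  · by_cases h : ∃ e : U, ∃ f : W, B e f ≠ 0
    · obtain ⟨e, f, hef⟩ := h
      rintro x ⟨t, ht, rfl⟩
      have key : ∀ y : U ⊗[ℂ] W,
          B e f • iotaMap B y - Tmap B y • iotaMap B (e ⊗ₜ f) ∈ Submodule.span ℂ S := by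
        intro y
        induction y using TensorProduct.induction_on with
        | zero => simp
        | tmul u w =>
            have heq : B e f • iotaMap B (u ⊗ₜ w) - Tmap B (u ⊗ₜ w) • iotaMap B (e ⊗ₜ f)
                = iotaMap B (u ⊗ₜ f) * iotaMap B (e ⊗ₜ w)
                  - iotaMap B (e ⊗ₜ w) * iotaMap B (u ⊗ₜ f) := by
              rw [iota_mul, iota_mul]
              simp only [LinearMap.rTensor_tmul, iotaMap_apply, Tmap_apply]
              rw [← smul_tmul', ← smul_tmul', map_smul, map_smul]
            rw [heq]
            exact Submodule.subset_span ⟨_, ⟨_, rfl⟩, _, ⟨_, rfl⟩, rfl⟩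
        | add a b ha hb =>
            have hmem := Submodule.add_mem _ ha hb
            convert hmem using 1
            simp only [map_add, smul_add, add_smul]
            abel
      have h1 := key t
      rw [LinearMap.mem_ker.mp ht, zero_smul, sub_zero] at h1
      have := Submodule.smul_mem (Submodule.span ℂ S) (B e f)⁻¹ h1
      rwa [inv_smul_smul₀ hef] at this
    · push_neg at h
      have hU : ∀ u : U, u = 0 := fun u => hB1 u (fun w => h u w)
      rintro x ⟨t, _, rfl⟩
      haveI : Subsingleton U := subsingleton_of_forall_eq 0 fun u => hU u
      have : iotaMap B t = 0 := Subsingleton.elim _ _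
      rw [this]
      exact Submodule.zero_mem _
end

section
/- (Mackey) Let (U, W, B) be a linear system over ℂ in which both U and W have countably infinite dimension. Then there exist bases (u_i)_{i∈ℕ} of U and (w_j)_{j∈ℕ} of W which are dual with respect to B, i.e. B(u_i, w_j) = 1 if i = j and B(u_i, w_j) = 0 if i ≠ j. -/
open Submodule Set

namespace Stmt4Aux

variable {U W : Type*} [AddCommGroup U] [Module ℂ U] [AddCommGroup W] [Module ℂ W]


def Inv (B : U →ₗ[ℂ] W →ₗ[ℂ] ℂ) (e : ℕ → U) (f : ℕ → W) {n : ℕ} (p : Fin n → U × W) : Prop :=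
  (∀ i j, B (p i).1 (p j).2 = if i = j then 1 else 0) ∧
  (∀ m, 2*m < n → e m ∈ Submodule.span ℂ (Set.range fun i => (p i).1)) ∧
  (∀ m, 2*m+1 < n → f m ∈ Submodule.span ℂ (Set.range fun i => (p i).2))

lemma aux_extend (B : U →ₗ[ℂ] W →ₗ[ℂ] ℂ)
    (hB1 : ∀ u : U, (∀ w : W, B u w = 0) → u = 0)
    (hU : Module.rank ℂ U = Cardinal.aleph0)
    {n : ℕ} (u : Fin n → U) (w : Fin n → W)
    (hd : ∀ i j, B (u i) (w j) = if i = j then 1 else 0) (t : U) :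
    ∃ (u' : U) (w' : W), (∀ i, B (u i) w' = 0) ∧ (∀ j, B u' (w j) = 0) ∧ B u' w' = 1 ∧
      t ∈ Submodule.span ℂ (insert u' (Set.range u)) := by
  have hne : Submodule.span ℂ (Set.range u) ≠ ⊤ := by
    intro h
    have h1 : Module.rank ℂ (Submodule.span ℂ (Set.range u)) < Cardinal.aleph0 := by
      exact lt_of_le_of_lt (rank_span_le _) ((Set.finite_range u).lt_aleph0)
    rw [h] at h1
    rw [rank_top, hU] at h1
    exact lt_irrefl _ h1
  obtain ⟨t₀, ht₀, hts⟩ : ∃ t₀, t₀ ∉ Submodule.span ℂ (Set.range u) ∧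
      t ∈ Submodule.span ℂ (insert t₀ (Set.range u)) := by
    by_cases ht : t ∈ Submodule.span ℂ (Set.range u)
    · have : ∃ x, x ∉ Submodule.span ℂ (Set.range u) := by
        by_contra hc
        push_neg at hc
        exact hne (Submodule.eq_top_iff'.2 hc)
      obtain ⟨x, hx⟩ := this
      exact ⟨x, hx, Submodule.span_mono (Set.subset_insert _ _) ht⟩
    · exact ⟨t, ht, Submodule.subset_span (Set.mem_insert _ _)⟩
  set s : U := ∑ i, B t₀ (w i) • u i with hs
  have hsmem : s ∈ Submodule.span ℂ (Set.range u) :=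
    Submodule.sum_mem _ fun i _ => Submodule.smul_mem _ _ (Submodule.subset_span ⟨i, rfl⟩)
  set u' : U := t₀ - s with hu'
  have hu'w : ∀ j, B u' (w j) = 0 := by
    intro j
    simp only [hu', hs, map_sub, map_sum, map_smul, LinearMap.sub_apply, LinearMap.sum_apply,
      LinearMap.smul_apply, smul_eq_mul, hd, mul_ite, mul_one, mul_zero]
    simp
  have hu'0 : u' ≠ 0 := by
    intro h
    rw [hu', sub_eq_zero] at h
    exact ht₀ (h ▸ hsmem)
  obtain ⟨w₀, hw₀⟩ : ∃ w₀, B u' w₀ ≠ 0 := by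
    by_contra h
    push_neg at h
    exact hu'0 (hB1 _ h)
  set c : ℂ := B u' w₀ with hc
  refine ⟨u', c⁻¹ • (w₀ - ∑ i, B (u i) w₀ • w i), ?_, hu'w, ?_, ?_⟩
  · intro i
    simp only [map_smul, map_sub, map_sum, smul_eq_mul, hd, mul_ite, mul_one, mul_zero]
    simp [Finset.sum_ite_eq]
  · simp only [map_smul, map_sub, map_sum, smul_eq_mul, hu'w, mul_zero, Finset.sum_const_zero,
      sub_zero, ← hc]
    exact inv_mul_cancel₀ hw₀
  · have hle : Submodule.span ℂ (insert t₀ (Set.range u)) ≤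
        Submodule.span ℂ (insert u' (Set.range u)) := by
      rw [Submodule.span_le]
      intro x hx
      rcases hx with rfl | hx
      · have hteq : x = u' + s := by simp [hu']
        rw [hteq]
        exact Submodule.add_mem _ (Submodule.subset_span (Set.mem_insert _ _))
          (Submodule.span_mono (Set.subset_insert _ _) hsmem)
      · exact Submodule.subset_span (Set.mem_insert_of_mem _ hx)
    exact hle hts

lemma step_exists (B : U →ₗ[ℂ] W →ₗ[ℂ] ℂ)
    (hB1 : ∀ u : U, (∀ w : W, B u w = 0) → u = 0)
    (hB2 : ∀ w : W, (∀ u : U, B u w = 0) → w = 0)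
    (hU : Module.rank ℂ U = Cardinal.aleph0)
    (hW : Module.rank ℂ W = Cardinal.aleph0)
    (e : ℕ → U) (f : ℕ → W)
    {n : ℕ} (p : Fin n → U × W) (hp : Inv B e f p) :
    ∃ q : U × W, Inv B e f (Fin.snoc p q) := by
  obtain ⟨hd, hcU, hcW⟩ := hp
  rcases Nat.even_or_odd n with ⟨m, hm⟩ | ⟨m, hm⟩
  · -- n = m + m, even; target e m
    obtain ⟨u', w', h1, h2, h3, h4⟩ :=
      aux_extend B hB1 hU (fun i => (p i).1) (fun i => (p i).2) hd (e m)
    refine ⟨(u', w'), ?_, ?_, ?_⟩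
    · intro i j
      refine Fin.lastCases ?_ ?_ i <;> [skip; intro i'] <;>
        (refine Fin.lastCases ?_ ?_ j <;> [skip; intro j'])
      · simp [h3]
      · simpa [(Fin.castSucc_lt_last j').ne'] using h2 j'
      · simpa [(Fin.castSucc_lt_last i').ne] using h1 i'
      · simpa [Fin.castSucc_inj] using hd i' j'
    · intro m' hm'
      rcases lt_or_eq_of_le (Nat.lt_succ_iff.mp hm') with hlt | heq
      · refine Submodule.span_mono ?_ (hcU m' hlt)
        rintro _ ⟨i, rfl⟩
        exact ⟨i.castSucc, by simp⟩
      · have hmm : m' = m := by omega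
        subst hmm
        refine Submodule.span_le.2 ?_ h4
        rintro x (rfl | ⟨i, rfl⟩)
        · exact Submodule.subset_span ⟨Fin.last n, by simp⟩
        · exact Submodule.subset_span ⟨i.castSucc, by simp⟩
    · intro m' hm'
      have hlt : 2*m'+1 < n := by omega
      refine Submodule.span_mono ?_ (hcW m' hlt)
      rintro _ ⟨i, rfl⟩
      exact ⟨i.castSucc, by simp⟩
  · -- n = 2*m+1, odd; target f m
    have hd' : ∀ i j, B.flip ((p i).2) ((p j).1) = if i = j then 1 else 0 := by
      intro i j
      rw [LinearMap.flip_apply, hd j i]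
      simp [eq_comm]
    obtain ⟨a, b, h1, h2, h3, h4⟩ :=
      aux_extend B.flip hB2 hW (fun i => (p i).2) (fun i => (p i).1) hd' (f m)
    refine ⟨(b, a), ?_, ?_, ?_⟩
    · intro i j
      refine Fin.lastCases ?_ ?_ i <;> [skip; intro i'] <;>
        (refine Fin.lastCases ?_ ?_ j <;> [skip; intro j'])
      · simpa using h3
      · simpa [(Fin.castSucc_lt_last j').ne'] using h1 j'
      · simpa [(Fin.castSucc_lt_last i').ne] using h2 i'
      · simpa [Fin.castSucc_inj] using hd i' j'
    · intro m' hm'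
      have hlt : 2*m' < n := by omega
      refine Submodule.span_mono ?_ (hcU m' hlt)
      rintro _ ⟨i, rfl⟩
      exact ⟨i.castSucc, by simp⟩
    · intro m' hm'
      rcases lt_or_eq_of_le (Nat.lt_succ_iff.mp hm') with hlt | heq
      · refine Submodule.span_mono ?_ (hcW m' hlt)
        rintro _ ⟨i, rfl⟩
        exact ⟨i.castSucc, by simp⟩
      · have hmm : m' = m := by omega
        subst hmm
        refine Submodule.span_le.2 ?_ h4
        rintro x (rfl | ⟨i, rfl⟩)
        · exact Submodule.subset_span ⟨Fin.last n, by simp⟩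
        · exact Submodule.subset_span ⟨i.castSucc, by simp⟩


noncomputable def chain (B : U →ₗ[ℂ] W →ₗ[ℂ] ℂ)
    (hB1 : ∀ u : U, (∀ w : W, B u w = 0) → u = 0)
    (hB2 : ∀ w : W, (∀ u : U, B u w = 0) → w = 0)
    (hU : Module.rank ℂ U = Cardinal.aleph0)
    (hW : Module.rank ℂ W = Cardinal.aleph0)
    (e : ℕ → U) (f : ℕ → W) :
    ∀ n : ℕ, {p : Fin n → U × W // Inv B e f p}
  | 0 => ⟨Fin.elim0, fun i => i.elim0, fun _ h => absurd h (by omega),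
      fun _ h => absurd h (by omega)⟩
  | n+1 =>
    ⟨Fin.snoc (chain B hB1 hB2 hU hW e f n).1
        (Classical.choose (step_exists B hB1 hB2 hU hW e f _ (chain B hB1 hB2 hU hW e f n).2)),
      Classical.choose_spec (step_exists B hB1 hB2 hU hW e f _ (chain B hB1 hB2 hU hW e f n).2)⟩

lemma chain_castSucc (B : U →ₗ[ℂ] W →ₗ[ℂ] ℂ) (hB1 : ∀ u : U, (∀ w : W, B u w = 0) → u = 0)
    (hB2 : ∀ w : W, (∀ u : U, B u w = 0) → w = 0)
    (hU : Module.rank ℂ U = Cardinal.aleph0)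
    (hW : Module.rank ℂ W = Cardinal.aleph0) (e : ℕ → U) (f : ℕ → W)
    (n : ℕ) (i : Fin n) :
    (chain B hB1 hB2 hU hW e f (n+1)).1 i.castSucc = (chain B hB1 hB2 hU hW e f n).1 i := by
  simp [chain]

noncomputable def seqP (B : U →ₗ[ℂ] W →ₗ[ℂ] ℂ) (hB1 : ∀ u : U, (∀ w : W, B u w = 0) → u = 0)
    (hB2 : ∀ w : W, (∀ u : U, B u w = 0) → w = 0)
    (hU : Module.rank ℂ U = Cardinal.aleph0)
    (hW : Module.rank ℂ W = Cardinal.aleph0) (e : ℕ → U) (f : ℕ → W)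
    (n : ℕ) : U × W :=
  (chain B hB1 hB2 hU hW e f (n+1)).1 (Fin.last n)

lemma chain_eq_seq (B : U →ₗ[ℂ] W →ₗ[ℂ] ℂ) (hB1 : ∀ u : U, (∀ w : W, B u w = 0) → u = 0)
    (hB2 : ∀ w : W, (∀ u : U, B u w = 0) → w = 0)
    (hU : Module.rank ℂ U = Cardinal.aleph0)
    (hW : Module.rank ℂ W = Cardinal.aleph0) (e : ℕ → U) (f : ℕ → W) :
    ∀ (n : ℕ) (i : Fin n),
      (chain B hB1 hB2 hU hW e f n).1 i = seqP B hB1 hB2 hU hW e f i.1 := by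
  intro n
  induction n with
  | zero => exact fun i => i.elim0
  | succ n ih =>
    intro i
    refine Fin.lastCases ?_ ?_ i
    · rfl
    · intro i'
      rw [chain_castSucc]
      simpa using ih i'

lemma exists_dual_seq (B : U →ₗ[ℂ] W →ₗ[ℂ] ℂ)
    (hB1 : ∀ u : U, (∀ w : W, B u w = 0) → u = 0)
    (hB2 : ∀ w : W, (∀ u : U, B u w = 0) → w = 0)
    (hU : Module.rank ℂ U = Cardinal.aleph0)
    (hW : Module.rank ℂ W = Cardinal.aleph0)
    (e : ℕ → U) (f : ℕ → W) :
    ∃ (u : ℕ → U) (w : ℕ → W),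
      (∀ i j, B (u i) (w j) = if i = j then 1 else 0) ∧
      (∀ m, e m ∈ Submodule.span ℂ (Set.range u)) ∧
      (∀ m, f m ∈ Submodule.span ℂ (Set.range w)) := by
  refine ⟨fun k => (seqP B hB1 hB2 hU hW e f k).1, fun k => (seqP B hB1 hB2 hU hW e f k).2,
    ?_, ?_, ?_⟩
  · intro i j
    have hi : i < max i j + 1 := by omega
    have hj : j < max i j + 1 := by omega
    have h := (chain B hB1 hB2 hU hW e f (max i j + 1)).2.1 ⟨i, hi⟩ ⟨j, hj⟩
    rw [chain_eq_seq, chain_eq_seq] at h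
    simpa [Fin.ext_iff] using h
  · intro m
    have h := (chain B hB1 hB2 hU hW e f (2*m+1)).2.2.1 m (by omega)
    refine Submodule.span_mono ?_ h
    rintro _ ⟨i, rfl⟩
    exact ⟨i.1, by simp only []; rw [chain_eq_seq B hB1 hB2 hU hW e f _ i]⟩
  · intro m
    have h := (chain B hB1 hB2 hU hW e f (2*m+2)).2.2.2 m (by omega)
    refine Submodule.span_mono ?_ h
    rintro _ ⟨i, rfl⟩
    exact ⟨i.1, by simp only []; rw [chain_eq_seq B hB1 hB2 hU hW e f _ i]⟩

lemma exists_nat_spanning (hU : Module.rank ℂ U = Cardinal.aleph0) :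
    ∃ e : ℕ → U, Submodule.span ℂ (Set.range e) = ⊤ := by
  let b := Module.Basis.ofVectorSpace ℂ U
  have hcard : Cardinal.mk (Module.Basis.ofVectorSpaceIndex ℂ U) = Cardinal.aleph0 := by
    rw [b.mk_eq_rank'', hU]
  have : Countable (Module.Basis.ofVectorSpaceIndex ℂ U) :=
    Cardinal.mk_le_aleph0_iff.mp hcard.le
  have : Infinite (Module.Basis.ofVectorSpaceIndex ℂ U) :=
    Cardinal.infinite_iff.mpr hcard.ge
  obtain ⟨d⟩ := nonempty_denumerable (Module.Basis.ofVectorSpaceIndex ℂ U)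
  exact ⟨b.reindex (Denumerable.eqv _), (b.reindex (Denumerable.eqv _)).span_eq⟩

end Stmt4Aux

/-- (Mackey) A linear system `(U, W, B)` over `ℂ` with `U` and `W` of countably infinite
dimension admits a pair of dual bases: bases `(u_i)_{i∈ℕ}` of `U` and `(w_j)_{j∈ℕ}` of `W`
with `B (u_i) (w_j) = δ_{ij}`. -/
theorem stmt_4 {U W : Type*} [AddCommGroup U] [Module ℂ U] [AddCommGroup W] [Module ℂ W]
    (B : U →ₗ[ℂ] W →ₗ[ℂ] ℂ)
    (hB1 : ∀ u : U, (∀ w : W, B u w = 0) → u = 0)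
    (hB2 : ∀ w : W, (∀ u : U, B u w = 0) → w = 0)
    (hU : Module.rank ℂ U = Cardinal.aleph0)
    (hW : Module.rank ℂ W = Cardinal.aleph0) :
    ∃ (bu : Module.Basis ℕ ℂ U) (bw : Module.Basis ℕ ℂ W),
      ∀ i j : ℕ, B (bu i) (bw j) = if i = j then 1 else 0 := by
  obtain ⟨e, he⟩ := Stmt4Aux.exists_nat_spanning hU
  obtain ⟨f, hf⟩ := Stmt4Aux.exists_nat_spanning hW
  obtain ⟨u, w, hd, hcU, hcW⟩ := Stmt4Aux.exists_dual_seq B hB1 hB2 hU hW e f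
  have hUspan : Submodule.span ℂ (Set.range u) = ⊤ := by
    rw [eq_top_iff, ← he, Submodule.span_le]
    rintro _ ⟨m, rfl⟩
    exact hcU m
  have hWspan : Submodule.span ℂ (Set.range w) = ⊤ := by
    rw [eq_top_iff, ← hf, Submodule.span_le]
    rintro _ ⟨m, rfl⟩
    exact hcW m
  -- coefficient lemmas
  have coeffU : ∀ m : U, ∃ c : ℕ →₀ ℂ, ∀ i, B m (w i) = c i := by
    intro m
    have hm : m ∈ Submodule.span ℂ (Set.range u) := hUspan ▸ Submodule.mem_top
    obtain ⟨c, hc⟩ := Finsupp.mem_span_range_iff_exists_finsupp.mp hm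
    refine ⟨c, fun i => ?_⟩
    rw [← hc, Finsupp.sum, map_sum]
    simp only [map_smul, LinearMap.smul_apply, LinearMap.sum_apply, smul_eq_mul, hd, mul_ite,
      mul_one, mul_zero]
    rw [Finset.sum_ite_eq' c.support i]
    split
    · rfl
    · exact (Finsupp.notMem_support_iff.mp ‹_›).symm
  have coeffW : ∀ m : W, ∃ c : ℕ →₀ ℂ, ∀ i, B (u i) m = c i := by
    intro m
    have hm : m ∈ Submodule.span ℂ (Set.range w) := hWspan ▸ Submodule.mem_top
    obtain ⟨c, hc⟩ := Finsupp.mem_span_range_iff_exists_finsupp.mp hm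
    refine ⟨c, fun i => ?_⟩
    rw [← hc, Finsupp.sum, map_sum]
    simp only [map_smul, smul_eq_mul, hd, mul_ite, mul_one, mul_zero]
    rw [Finset.sum_ite_eq c.support i]
    split
    · rfl
    · exact (Finsupp.notMem_support_iff.mp ‹_›).symm
  have dbU : Module.DualBases u (fun i => B.flip (w i)) := by
    refine ⟨fun i => ?_, fun i j hij => ?_, fun {m₁ m₂} hm₁₂ => ?_, fun m => ?_⟩
    · simp [hd]
    · simp [LinearMap.flip_apply, hd, hij.symm]
    · have hm : ∀ i, B.flip (w i) (m₁ - m₂) = 0 := fun i => by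
        rw [map_sub, sub_eq_zero]; exact hm₁₂ i
      rw [← sub_eq_zero]
      generalize m₁ - m₂ = m at hm ⊢
      refine hB1 m fun w₀ => ?_
      have hsub : Submodule.span ℂ (Set.range w) ≤ LinearMap.ker (B m) := by
        rw [Submodule.span_le]
        rintro _ ⟨i, rfl⟩
        exact hm i
      rw [hWspan] at hsub
      exact hsub Submodule.mem_top
    · obtain ⟨c, hc⟩ := coeffU m
      refine Set.Finite.subset c.support.finite_toSet fun i hi => ?_
      simp only [LinearMap.flip_apply, Set.mem_setOf_eq] at hi
      rw [hc i] at hi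
      exact Finset.mem_coe.mpr (Finsupp.mem_support_iff.mpr hi)
  have dbW : Module.DualBases w (fun i => B (u i)) := by
    refine ⟨fun i => ?_, fun i j hij => ?_, fun {m₁ m₂} hm₁₂ => ?_, fun m => ?_⟩
    · simp [hd]
    · simp [hd, hij]
    · have hm : ∀ i, B (u i) (m₁ - m₂) = 0 := fun i => by
        rw [map_sub, sub_eq_zero]; exact hm₁₂ i
      rw [← sub_eq_zero]
      generalize m₁ - m₂ = m at hm ⊢
      refine hB2 m fun u₀ => ?_
      have hsub : Submodule.span ℂ (Set.range u) ≤ LinearMap.ker (B.flip m) := by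
        rw [Submodule.span_le]
        rintro _ ⟨i, rfl⟩
        exact hm i
      rw [hUspan] at hsub
      exact hsub Submodule.mem_top
    · obtain ⟨c, hc⟩ := coeffW m
      refine Set.Finite.subset c.support.finite_toSet fun i hi => ?_
      simp only [Set.mem_setOf_eq] at hi
      rw [hc i] at hi
      exact Finset.mem_coe.mpr (Finsupp.mem_support_iff.mpr hi)
  refine ⟨dbU.basis, dbW.basis, fun i j => ?_⟩
  rw [show dbU.basis i = u i from congrFun dbU.coe_basis i,
    show dbW.basis j = w j from congrFun dbW.coe_basis j]
  exact hd i j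
end

section
/- Let (U, W, B) be a linear system over ℂ in which both U and W have countably infinite dimension. Then (U, W, B) is isomorphic to the standard countable linear system: there exist ℂ-linear equivalences f : U ≃ (ℕ →₀ ℂ) and g : W ≃ (ℕ →₀ ℂ) such that B(u, w) = ∑_i f(u)(i) · g(w)(i) for all u ∈ U, w ∈ W. -/
section LSaux
open scoped Classical

variable {U : Type*} {W : Type*} [AddCommGroup U] [Module ℂ U] [AddCommGroup W] [Module ℂ W]

/-- Residual of `x : U` with respect to the first `n` dual pairs in `p`. -/
noncomputable def resU (B : U →ₗ[ℂ] W →ₗ[ℂ] ℂ) (p : ℕ → U × W) (n : ℕ) (x : U) : U :=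
  x - ∑ i ∈ Finset.range n, B x (p i).2 • (p i).1

/-- Residual of `y : W` with respect to the first `n` dual pairs in `p`. -/
noncomputable def resW (B : U →ₗ[ℂ] W →ₗ[ℂ] ℂ) (p : ℕ → U × W) (n : ℕ) (y : W) : W :=
  y - ∑ i ∈ Finset.range n, B (p i).1 y • (p i).2

/-- `x` if its residual is nonzero, otherwise some vector with nonzero residual. -/
noncomputable def pickU (B : U →ₗ[ℂ] W →ₗ[ℂ] ℂ) (p : ℕ → U × W) (n : ℕ) (x : U) : U :=
  if resU B p n x = 0 then Classical.epsilon (fun z : U => resU B p n z ≠ 0) else x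

noncomputable def pickW (B : U →ₗ[ℂ] W →ₗ[ℂ] ℂ) (p : ℕ → U × W) (n : ℕ) (y : W) : W :=
  if resW B p n y = 0 then Classical.epsilon (fun z : W => resW B p n z ≠ 0) else y

/-- One step of the back-and-forth construction of a pair of dual bases. -/
noncomputable def lsStep (B : U →ₗ[ℂ] W →ₗ[ℂ] ℂ) (a : ℕ → U) (b : ℕ → W)
    (n : ℕ) (p : ℕ → U × W) : U × W :=
  if Even n then
    let r := resU B p n (pickU B p n (a (n / 2)))
    let w0 := Classical.epsilon fun y : W => B r y ≠ 0
    (r, (B r w0)⁻¹ • resW B p n w0)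
  else
    let s := resW B p n (pickW B p n (b (n / 2)))
    let u0 := Classical.epsilon fun x : U => B x s ≠ 0
    ((B u0 s)⁻¹ • resU B p n u0, s)

noncomputable def lsPrefix (B : U →ₗ[ℂ] W →ₗ[ℂ] ℂ) (a : ℕ → U) (b : ℕ → W) :
    ℕ → ℕ → U × W
  | 0 => fun _ => (0, 0)
  | n + 1 => Function.update (lsPrefix B a b n) n (lsStep B a b n (lsPrefix B a b n))

noncomputable def lsSeq (B : U →ₗ[ℂ] W →ₗ[ℂ] ℂ) (a : ℕ → U) (b : ℕ → W) (n : ℕ) : U × W :=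
  lsPrefix B a b (n + 1) n

variable (B : U →ₗ[ℂ] W →ₗ[ℂ] ℂ) (a : ℕ → U) (b : ℕ → W)

lemma resU_congr {p q : ℕ → U × W} {n : ℕ} (h : ∀ i < n, p i = q i) :
    resU B p n = resU B q n := by
  funext x
  unfold resU
  congr 1
  exact Finset.sum_congr rfl fun i hi => by rw [h i (Finset.mem_range.mp hi)]

lemma resW_congr {p q : ℕ → U × W} {n : ℕ} (h : ∀ i < n, p i = q i) :
    resW B p n = resW B q n := by
  funext y
  unfold resW
  congr 1
  exact Finset.sum_congr rfl fun i hi => by rw [h i (Finset.mem_range.mp hi)]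

lemma pickU_congr {p q : ℕ → U × W} {n : ℕ} (h : ∀ i < n, p i = q i) :
    pickU B p n = pickU B q n := by
  funext x; unfold pickU; rw [resU_congr B h]

lemma pickW_congr {p q : ℕ → U × W} {n : ℕ} (h : ∀ i < n, p i = q i) :
    pickW B p n = pickW B q n := by
  funext y; unfold pickW; rw [resW_congr B h]

lemma lsStep_congr {p q : ℕ → U × W} {n : ℕ} (h : ∀ i < n, p i = q i) :
    lsStep B a b n p = lsStep B a b n q := by
  unfold lsStep
  rw [resU_congr B h, resW_congr B h, pickU_congr B h, pickW_congr B h]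

lemma lsPrefix_eq {n i : ℕ} (h : i < n) : lsPrefix B a b n i = lsSeq B a b i := by
  induction n with
  | zero => omega
  | succ n ih =>
    rcases Nat.lt_succ_iff_lt_or_eq.mp h with h' | h'
    · rw [lsPrefix, Function.update_of_ne (by omega), ih h']
    · subst h'; rfl

lemma lsSeq_eq (n : ℕ) : lsSeq B a b n = lsStep B a b n (lsSeq B a b) := by
  have h1 : lsSeq B a b n = lsStep B a b n (lsPrefix B a b n) := by
    show lsPrefix B a b (n + 1) n = _
    rw [lsPrefix, Function.update_self]
  rw [h1]
  exact lsStep_congr B a b fun i hi => lsPrefix_eq B a b hi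

lemma exists_resU_ne (hU : Module.rank ℂ U = Cardinal.aleph0) (p : ℕ → U × W) (n : ℕ) :
    ∃ z : U, resU B p n z ≠ 0 := by
  obtain ⟨z, hz⟩ : ∃ z : U,
      z ∉ Submodule.span ℂ (((Finset.range n).image fun i => (p i).1 : Finset U) : Set U) := by
    by_contra h
    push_neg at h
    have hspan : Submodule.span ℂ
        (((Finset.range n).image fun i => (p i).1 : Finset U) : Set U) = ⊤ :=
      eq_top_iff.mpr fun z _ => h z
    have h1 := rank_span_le (R := ℂ)
        (((Finset.range n).image fun i => (p i).1 : Finset U) : Set U)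
    rw [hspan, rank_top, hU] at h1
    exact absurd (h1.trans_lt (((Finset.range n).image fun i => (p i).1).finite_toSet.lt_aleph0))
      (lt_irrefl _)
  refine ⟨z, fun h0 => hz ?_⟩
  have : z = ∑ i ∈ Finset.range n, B z (p i).2 • (p i).1 := by
    have := sub_eq_zero.mp h0
    simpa [resU] using sub_eq_zero.mp h0
  rw [this]
  exact Submodule.sum_mem _ fun i hi => Submodule.smul_mem _ _
    (Submodule.subset_span (Finset.mem_coe.mpr (Finset.mem_image_of_mem _ hi)))

lemma exists_resW_ne (hW : Module.rank ℂ W = Cardinal.aleph0) (p : ℕ → U × W) (n : ℕ) :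
    ∃ z : W, resW B p n z ≠ 0 := by
  obtain ⟨z, hz⟩ : ∃ z : W,
      z ∉ Submodule.span ℂ (((Finset.range n).image fun i => (p i).2 : Finset W) : Set W) := by
    by_contra h
    push_neg at h
    have hspan : Submodule.span ℂ
        (((Finset.range n).image fun i => (p i).2 : Finset W) : Set W) = ⊤ :=
      eq_top_iff.mpr fun z _ => h z
    have h1 := rank_span_le (R := ℂ)
        (((Finset.range n).image fun i => (p i).2 : Finset W) : Set W)
    rw [hspan, rank_top, hW] at h1
    exact absurd (h1.trans_lt (((Finset.range n).image fun i => (p i).2).finite_toSet.lt_aleph0))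
      (lt_irrefl _)
  refine ⟨z, fun h0 => hz ?_⟩
  have : z = ∑ i ∈ Finset.range n, B (p i).1 z • (p i).2 := by
    simpa [resW] using sub_eq_zero.mp h0
  rw [this]
  exact Submodule.sum_mem _ fun i hi => Submodule.smul_mem _ _
    (Submodule.subset_span (Finset.mem_coe.mpr (Finset.mem_image_of_mem _ hi)))

lemma resU_pickU_ne (hU : Module.rank ℂ U = Cardinal.aleph0) (p : ℕ → U × W) (n : ℕ) (x : U) :
    resU B p n (pickU B p n x) ≠ 0 := by
  unfold pickU
  split
  · exact Classical.epsilon_spec (exists_resU_ne B hU p n)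
  · assumption

lemma resW_pickW_ne (hW : Module.rank ℂ W = Cardinal.aleph0) (p : ℕ → U × W) (n : ℕ) (y : W) :
    resW B p n (pickW B p n y) ≠ 0 := by
  unfold pickW
  split
  · exact Classical.epsilon_spec (exists_resW_ne B hW p n)
  · assumption

lemma resU_pair {p : ℕ → U × W} {n : ℕ}
    (hD : ∀ i < n, ∀ j < n, B (p i).1 (p j).2 = if i = j then 1 else 0)
    {j : ℕ} (hj : j < n) (x : U) : B (resU B p n x) (p j).2 = 0 := by
  have hsum : ∑ i ∈ Finset.range n, B x (p i).2 * B (p i).1 (p j).2 = B x (p j).2 := by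
    rw [Finset.sum_congr rfl fun i hi => by
      rw [hD i (Finset.mem_range.mp hi) j hj, mul_ite, mul_one, mul_zero]]
    rw [Finset.sum_ite_eq' (Finset.range n) j fun i => B x (p i).2,
      if_pos (Finset.mem_range.mpr hj)]
  simp only [resU, map_sub, map_sum, map_smul, LinearMap.sub_apply, LinearMap.coe_sum,
    Finset.sum_apply, LinearMap.smul_apply, smul_eq_mul]
  rw [hsum, sub_self]

lemma resW_pair {p : ℕ → U × W} {n : ℕ}
    (hD : ∀ i < n, ∀ j < n, B (p i).1 (p j).2 = if i = j then 1 else 0)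
    {j : ℕ} (hj : j < n) (y : W) : B (p j).1 (resW B p n y) = 0 := by
  have hsum : ∑ i ∈ Finset.range n, B (p i).1 y * B (p j).1 (p i).2 = B (p j).1 y := by
    rw [Finset.sum_congr rfl fun i hi => by
      rw [hD j hj i (Finset.mem_range.mp hi), mul_ite, mul_one, mul_zero]]
    rw [Finset.sum_ite_eq (Finset.range n) j fun i => B (p i).1 y,
      if_pos (Finset.mem_range.mpr hj)]
  simp only [resW, map_sub, map_sum, map_smul, smul_eq_mul]
  rw [hsum, sub_self]

lemma B_resU_resW {p : ℕ → U × W} {n : ℕ}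
    (hD : ∀ i < n, ∀ j < n, B (p i).1 (p j).2 = if i = j then 1 else 0)
    (x : U) (y : W) : B (resU B p n x) (resW B p n y) = B (resU B p n x) y := by
  rw [resW, map_sub, map_sum]
  have : ∑ i ∈ Finset.range n, B (resU B p n x) (B (p i).1 y • (p i).2) = 0 :=
    Finset.sum_eq_zero fun i hi => by
      rw [map_smul, resU_pair B hD (Finset.mem_range.mp hi) x, smul_zero]
  rw [this, sub_zero]

noncomputable def rrU (n : ℕ) : U :=
  resU B (lsSeq B a b) n (pickU B (lsSeq B a b) n (a (n / 2)))

noncomputable def ww0 (n : ℕ) : W :=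
  Classical.epsilon fun y : W => B (rrU B a b n) y ≠ 0

noncomputable def ssW (n : ℕ) : W :=
  resW B (lsSeq B a b) n (pickW B (lsSeq B a b) n (b (n / 2)))

noncomputable def uu0 (n : ℕ) : U :=
  Classical.epsilon fun x : U => B x (ssW B a b n) ≠ 0

lemma lsSeq_even {n : ℕ} (he : Even n) :
    lsSeq B a b n = (rrU B a b n,
      (B (rrU B a b n) (ww0 B a b n))⁻¹ • resW B (lsSeq B a b) n (ww0 B a b n)) := by
  rw [lsSeq_eq B a b n]; unfold lsStep; rw [if_pos he]; rfl

lemma lsSeq_odd {n : ℕ} (ho : ¬ Even n) :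
    lsSeq B a b n = ((B (uu0 B a b n) (ssW B a b n))⁻¹ • resU B (lsSeq B a b) n (uu0 B a b n),
      ssW B a b n) := by
  rw [lsSeq_eq B a b n]; unfold lsStep; rw [if_neg ho]; rfl

lemma rrU_ne (hU : Module.rank ℂ U = Cardinal.aleph0) (n : ℕ) : rrU B a b n ≠ 0 :=
  resU_pickU_ne B hU _ _ _

lemma ssW_ne (hW : Module.rank ℂ W = Cardinal.aleph0) (n : ℕ) : ssW B a b n ≠ 0 :=
  resW_pickW_ne B hW _ _ _

lemma B_rrU_ww0 (hB1 : ∀ u : U, (∀ w : W, B u w = 0) → u = 0)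
    (hU : Module.rank ℂ U = Cardinal.aleph0) (n : ℕ) :
    B (rrU B a b n) (ww0 B a b n) ≠ 0 := by
  have hex : ∃ y : W, B (rrU B a b n) y ≠ 0 := by
    by_contra h
    push_neg at h
    exact rrU_ne B a b hU n (hB1 _ h)
  exact Classical.epsilon_spec hex

lemma B_uu0_ssW (hB2 : ∀ w : W, (∀ u : U, B u w = 0) → w = 0)
    (hW : Module.rank ℂ W = Cardinal.aleph0) (n : ℕ) :
    B (uu0 B a b n) (ssW B a b n) ≠ 0 := by
  have hex : ∃ x : U, B x (ssW B a b n) ≠ 0 := by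
    by_contra h
    push_neg at h
    exact ssW_ne B a b hW n (hB2 _ h)
  exact Classical.epsilon_spec hex

lemma B_resU_resW' {p : ℕ → U × W} {n : ℕ}
    (hD : ∀ i < n, ∀ j < n, B (p i).1 (p j).2 = if i = j then 1 else 0)
    (x : U) (y : W) : B (resU B p n x) (resW B p n y) = B x (resW B p n y) := by
  rw [resU, map_sub, LinearMap.sub_apply, map_sum, LinearMap.coe_sum, Finset.sum_apply]
  have : ∑ i ∈ Finset.range n, (B (B x (p i).2 • (p i).1)) (resW B p n y) = 0 :=
    Finset.sum_eq_zero fun i hi => by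
      rw [map_smul, LinearMap.smul_apply, resW_pair B hD (Finset.mem_range.mp hi) y, smul_zero]
  rw [this, sub_zero]

lemma lsSeq_dual (hB1 : ∀ u : U, (∀ w : W, B u w = 0) → u = 0)
    (hB2 : ∀ w : W, (∀ u : U, B u w = 0) → w = 0)
    (hU : Module.rank ℂ U = Cardinal.aleph0) (hW : Module.rank ℂ W = Cardinal.aleph0) :
    ∀ n, ∀ i < n, ∀ j < n,
      B (lsSeq B a b i).1 (lsSeq B a b j).2 = if i = j then 1 else 0 := by
  intro n
  induction n with
  | zero => omega
  | succ n ih =>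
    intro i hi j hj
    rcases Nat.lt_succ_iff_lt_or_eq.mp hi with hi' | hi' <;>
      rcases Nat.lt_succ_iff_lt_or_eq.mp hj with hj' | hj'
    · exact ih i hi' j hj'
    · -- i < n, j = n
      rw [hj', if_neg (by omega)]
      rcases Nat.even_or_odd n with he | ho
      · have h2 : (lsSeq B a b n).2 =
            (B (rrU B a b n) (ww0 B a b n))⁻¹ • resW B (lsSeq B a b) n (ww0 B a b n) := by
          rw [lsSeq_even B a b he]
        rw [h2, map_smul, resW_pair B ih hi', smul_zero]
      · have h2 : (lsSeq B a b n).2 = ssW B a b n := by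
          rw [lsSeq_odd B a b (Nat.not_even_iff_odd.mpr ho)]
        rw [h2]
        exact resW_pair B ih hi' _
    · -- i = n, j < n
      rw [hi', if_neg (by omega)]
      rcases Nat.even_or_odd n with he | ho
      · have h1 : (lsSeq B a b n).1 = rrU B a b n := by rw [lsSeq_even B a b he]
        rw [h1]
        exact resU_pair B ih hj' _
      · have h1 : (lsSeq B a b n).1 =
            (B (uu0 B a b n) (ssW B a b n))⁻¹ • resU B (lsSeq B a b) n (uu0 B a b n) := by
          rw [lsSeq_odd B a b (Nat.not_even_iff_odd.mpr ho)]
        rw [h1, map_smul, LinearMap.smul_apply, resU_pair B ih hj', smul_zero]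
    · -- i = j = n
      rw [hi', hj', if_pos rfl]
      rcases Nat.even_or_odd n with he | ho
      · rw [lsSeq_even B a b he]
        show B (rrU B a b n)
            ((B (rrU B a b n) (ww0 B a b n))⁻¹ • resW B (lsSeq B a b) n (ww0 B a b n)) = 1
        rw [map_smul, smul_eq_mul]
        have : B (rrU B a b n) (resW B (lsSeq B a b) n (ww0 B a b n)) =
            B (rrU B a b n) (ww0 B a b n) := B_resU_resW B ih _ _
        rw [this, inv_mul_cancel₀ (B_rrU_ww0 B a b hB1 hU n)]
      · rw [lsSeq_odd B a b (Nat.not_even_iff_odd.mpr ho)]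
        show B ((B (uu0 B a b n) (ssW B a b n))⁻¹ • resU B (lsSeq B a b) n (uu0 B a b n))
            (ssW B a b n) = 1
        rw [map_smul, LinearMap.smul_apply, smul_eq_mul]
        have : B (resU B (lsSeq B a b) n (uu0 B a b n)) (ssW B a b n) =
            B (uu0 B a b n) (ssW B a b n) := B_resU_resW' B ih _ _
        rw [this, inv_mul_cancel₀ (B_uu0_ssW B a b hB2 hW n)]

lemma a_mem_span (m : ℕ) :
    a m ∈ Submodule.span ℂ (Set.range fun n => (lsSeq B a b n).1) := by
  have he : Even (2 * m) := even_two_mul m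
  have hm : (2 * m) / 2 = m := by omega
  have hsum : ∑ i ∈ Finset.range (2 * m),
      B (a m) (lsSeq B a b i).2 • (lsSeq B a b i).1 ∈
      Submodule.span ℂ (Set.range fun n => (lsSeq B a b n).1) :=
    Submodule.sum_mem _ fun i _ => Submodule.smul_mem _ _
      (Submodule.subset_span (Set.mem_range_self i))
  by_cases hr : resU B (lsSeq B a b) (2 * m) (a m) = 0
  · have : a m = ∑ i ∈ Finset.range (2 * m),
        B (a m) (lsSeq B a b i).2 • (lsSeq B a b i).1 := by
      simpa [resU] using sub_eq_zero.mp hr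
    rw [this]; exact hsum
  · have h1 : (lsSeq B a b (2 * m)).1 = resU B (lsSeq B a b) (2 * m) (a m) := by
      rw [lsSeq_even B a b he]
      show rrU B a b (2 * m) = _
      unfold rrU pickU
      rw [hm, if_neg hr]
    have : a m = (lsSeq B a b (2 * m)).1 + ∑ i ∈ Finset.range (2 * m),
        B (a m) (lsSeq B a b i).2 • (lsSeq B a b i).1 := by
      rw [h1, resU]; abel
    rw [this]
    exact Submodule.add_mem _ (Submodule.subset_span (Set.mem_range_self _)) hsum

lemma b_mem_span (m : ℕ) :
    b m ∈ Submodule.span ℂ (Set.range fun n => (lsSeq B a b n).2) := by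
  have ho : ¬ Even (2 * m + 1) := by simp [Nat.even_add_one, parity_simps]
  have hm : (2 * m + 1) / 2 = m := by omega
  have hsum : ∑ i ∈ Finset.range (2 * m + 1),
      B (lsSeq B a b i).1 (b m) • (lsSeq B a b i).2 ∈
      Submodule.span ℂ (Set.range fun n => (lsSeq B a b n).2) :=
    Submodule.sum_mem _ fun i _ => Submodule.smul_mem _ _
      (Submodule.subset_span (Set.mem_range_self i))
  by_cases hr : resW B (lsSeq B a b) (2 * m + 1) (b m) = 0
  · have : b m = ∑ i ∈ Finset.range (2 * m + 1),
        B (lsSeq B a b i).1 (b m) • (lsSeq B a b i).2 := by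
      simpa [resW] using sub_eq_zero.mp hr
    rw [this]; exact hsum
  · have h1 : (lsSeq B a b (2 * m + 1)).2 = resW B (lsSeq B a b) (2 * m + 1) (b m) := by
      rw [lsSeq_odd B a b ho]
      show ssW B a b (2 * m + 1) = _
      unfold ssW pickW
      rw [hm, if_neg hr]
    have : b m = (lsSeq B a b (2 * m + 1)).2 + ∑ i ∈ Finset.range (2 * m + 1),
        B (lsSeq B a b i).1 (b m) • (lsSeq B a b i).2 := by
      rw [h1, resW]; abel
    rw [this]
    exact Submodule.add_mem _ (Submodule.subset_span (Set.mem_range_self _)) hsum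

end LSaux

/-- A linear system `(U, W, B)` over `ℂ` with `U` and `W` of countably infinite dimension
is isomorphic to the standard countable linear system `(ℕ →₀ ℂ, ℕ →₀ ℂ)` with the form
`(x, y) ↦ ∑ i, x i * y i`. -/
theorem stmt_5 {U W : Type*} [AddCommGroup U] [Module ℂ U] [AddCommGroup W] [Module ℂ W]
    (B : U →ₗ[ℂ] W →ₗ[ℂ] ℂ)
    (hB1 : ∀ u : U, (∀ w : W, B u w = 0) → u = 0)
    (hB2 : ∀ w : W, (∀ u : U, B u w = 0) → w = 0)
    (hU : Module.rank ℂ U = Cardinal.aleph0)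
    (hW : Module.rank ℂ W = Cardinal.aleph0) :
    ∃ (f : U ≃ₗ[ℂ] (ℕ →₀ ℂ)) (g : W ≃ₗ[ℂ] (ℕ →₀ ℂ)),
      ∀ (u : U) (w : W), B u w = (f u).sum fun i a => a * g w i := by
  classical
  -- ℕ-indexed bases of U and W
  obtain ⟨a, haspan⟩ : ∃ a : ℕ → U, Submodule.span ℂ (Set.range a) = ⊤ := by
    let b0 := Module.Basis.ofVectorSpace ℂ U
    have h1 := b0.mk_eq_rank
    rw [hU, Cardinal.lift_aleph0] at h1
    obtain ⟨d⟩ := Cardinal.denumerable_iff.mpr (Cardinal.lift_eq_aleph0.mp h1)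
    haveI := d
    exact ⟨⇑(b0.reindex (Denumerable.eqv _)), (b0.reindex (Denumerable.eqv _)).span_eq⟩
  obtain ⟨b, hbspan⟩ : ∃ b : ℕ → W, Submodule.span ℂ (Set.range b) = ⊤ := by
    let b0 := Module.Basis.ofVectorSpace ℂ W
    have h1 := b0.mk_eq_rank
    rw [hW, Cardinal.lift_aleph0] at h1
    obtain ⟨d⟩ := Cardinal.denumerable_iff.mpr (Cardinal.lift_eq_aleph0.mp h1)
    haveI := d
    exact ⟨⇑(b0.reindex (Denumerable.eqv _)), (b0.reindex (Denumerable.eqv _)).span_eq⟩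
  set p := lsSeq B a b with hp
  have hD : ∀ i j, B (p i).1 (p j).2 = if i = j then 1 else 0 := fun i j =>
    lsSeq_dual B a b hB1 hB2 hU hW (max i j + 1) i (by omega) j (by omega)
  -- the first components form a basis of U
  have hindepU : LinearIndependent ℂ fun n => (p n).1 := by
    rw [linearIndependent_iff']
    intro s g hsum i hi
    have h0 := congrArg (fun z => B z (p i).2) hsum
    simp only [map_sum, map_smul, LinearMap.coe_sum, Finset.sum_apply,
      LinearMap.smul_apply, smul_eq_mul, map_zero, LinearMap.zero_apply] at h0
    rw [Finset.sum_congr rfl (fun j _ => by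
        rw [hD j i, mul_ite, mul_one, mul_zero]),
      Finset.sum_ite_eq' s i g, if_pos hi] at h0
    exact h0
  have hindepW : LinearIndependent ℂ fun n => (p n).2 := by
    rw [linearIndependent_iff']
    intro s g hsum j hj
    have h0 := congrArg (fun z => B (p j).1 z) hsum
    simp only [map_sum, map_smul, smul_eq_mul, map_zero] at h0
    rw [Finset.sum_congr rfl (fun i _ => by
        rw [hD j i, mul_ite, mul_one, mul_zero]),
      Finset.sum_ite_eq s j g, if_pos hj] at h0
    exact h0
  have hspanU : ⊤ ≤ Submodule.span ℂ (Set.range fun n => (p n).1) := by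
    rw [← haspan]
    refine Submodule.span_le.mpr ?_
    rintro _ ⟨m, rfl⟩
    exact a_mem_span B a b m
  have hspanW : ⊤ ≤ Submodule.span ℂ (Set.range fun n => (p n).2) := by
    rw [← hbspan]
    refine Submodule.span_le.mpr ?_
    rintro _ ⟨m, rfl⟩
    exact b_mem_span B a b m
  let bU : Module.Basis ℕ ℂ U := Module.Basis.mk hindepU hspanU
  let bW : Module.Basis ℕ ℂ W := Module.Basis.mk hindepW hspanW
  refine ⟨bU.repr, bW.repr, fun u w => ?_⟩
  have hrep : ∀ i, B (p i).1 w = bW.repr w i := by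
    intro i
    conv_lhs => rw [← bW.linearCombination_repr w]
    rw [Finsupp.linearCombination_apply, Finsupp.sum, map_sum]
    have hc : ⇑bW = fun n => (p n).2 := Module.Basis.coe_mk _ _
    rw [hc]
    rw [Finset.sum_congr rfl (fun j _ => by
      rw [map_smul, smul_eq_mul, hD i j, mul_ite, mul_one, mul_zero])]
    rw [Finset.sum_ite_eq (bW.repr w).support i fun j => bW.repr w j]
    split
    · rfl
    · exact (Finsupp.notMem_support_iff.mp (by assumption)).symm
  conv_lhs => rw [← bU.linearCombination_repr u]
  rw [Finsupp.linearCombination_apply, Finsupp.sum, map_sum, LinearMap.coe_sum,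
    Finset.sum_apply]
  have hc : ⇑bU = fun n => (p n).1 := Module.Basis.coe_mk _ _
  rw [hc, Finsupp.sum]
  refine Finset.sum_congr rfl fun i _ => ?_
  rw [map_smul, LinearMap.smul_apply, smul_eq_mul, hrep i]
end

section
/- Let (U, W, B) be a linear system over ℂ. If X ⊆ U is a subspace invariant under sl_{U,W}, i.e. ι(t)(x) ∈ X for every t ∈ ker T and every x ∈ X, then X = 0 or X = U. (That is, U is a simple sl_{U,W}-module.) -/
open TensorProduct

variable {U W : Type*} [AddCommGroup U] [Module ℂ U] [AddCommGroup W] [Module ℂ W]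

/-- For a linear system `(U, W, B)`, the tautological `sl_{U,W}`-module `U` is simple:
any subspace of `U` stable under `ι(ker T)` is `⊥` or `⊤`. -/
theorem stmt_11 (B : U →ₗ[ℂ] W →ₗ[ℂ] ℂ)
    (hB1 : ∀ u : U, (∀ w : W, B u w = 0) → u = 0)
    (hB2 : ∀ w : W, (∀ u : U, B u w = 0) → w = 0)
    (X : Submodule ℂ U)
    (hX : ∀ t ∈ LinearMap.ker (Tmap B), ∀ x ∈ X, iotaMap B t x ∈ X) :
    X = ⊥ ∨ X = ⊤ := by
  by_cases hbot : X = ⊥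
  · exact Or.inl hbot
  right
  rw [← Ne, Submodule.ne_bot_iff] at hbot
  obtain ⟨x, hxX, hx0⟩ := hbot
  obtain ⟨w, hw⟩ : ∃ w, B x w ≠ 0 := by
    by_contra h
    push_neg at h
    exact hx0 (hB1 x h)
  rw [Submodule.eq_top_iff']
  intro u
  set t := u ⊗ₜ[ℂ] w - (B u w / B x w) • (x ⊗ₜ[ℂ] w) with ht
  have hT : t ∈ LinearMap.ker (Tmap B) := by
    simp only [LinearMap.mem_ker, ht, map_sub, map_smul, Tmap_apply, smul_eq_mul]
    field_simp
    simp
  have h1 := hX t hT x hxX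
  have h2 : iotaMap B t x = B x w • u - B u w • x := by
    simp only [ht, map_sub, map_smul, LinearMap.sub_apply, LinearMap.smul_apply,
      iotaMap_apply, smul_smul]
    rw [div_mul_cancel₀ _ hw]
  rw [h2] at h1
  have h3 : B x w • u ∈ X := by
    have := X.add_mem h1 (X.smul_mem (B u w) hxX)
    simpa using this
  have := X.smul_mem (B x w)⁻¹ h3
  simpa [smul_smul, inv_mul_cancel₀ hw] using this
end

section
/- Let (U, W, B) be a linear system over ℂ with 2 ≤ Module.rank ℂ W. Let X ⊆ U* be a nonzero subspace invariant under the dual action of sl_{U,W}, i.e. ξ ∘ ι(t) ∈ X for every ξ ∈ X and every t ∈ ker T. Then W̃ := j_W(W) ⊆ X. (Hence W̃ is the socle of the sl_{U,W}-module U*.) -/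
open TensorProduct

variable {U W : Type*} [AddCommGroup U] [Module ℂ U] [AddCommGroup W] [Module ℂ W]

/-- For a linear system `(U, W, B)` with `2 ≤ dim W`: any nonzero subspace `X ⊆ U*`
stable under the dual action of `sl_{U,W}` (i.e. under `ξ ↦ ξ ∘ ι(t)` for `t ∈ ker T`)
contains `W̃ = range B.flip`.  Hence `W̃` is the socle of the `sl_{U,W}`-module `U*`. -/
theorem stmt_12 (B : U →ₗ[ℂ] W →ₗ[ℂ] ℂ)
    (hB1 : ∀ u : U, (∀ w : W, B u w = 0) → u = 0)
    (hB2 : ∀ w : W, (∀ u : U, B u w = 0) → w = 0)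
    (hrank : 2 ≤ Module.rank ℂ W)
    (X : Submodule ℂ (Module.Dual ℂ U)) (hne : X ≠ ⊥)
    (hX : ∀ ξ ∈ X, ∀ t ∈ LinearMap.ker (Tmap B), (iotaMap B t).dualMap ξ ∈ X) :
    LinearMap.range B.flip ≤ X := by

  -- Key fact: if ξ ∈ X and B u w = 0, then ξ u • B.flip w ∈ X.
  have key : ∀ ξ ∈ X, ∀ (u : U) (w : W), B u w = 0 → ξ u • B.flip w ∈ X := by
    intro ξ hξ u w huw
    have ht : u ⊗ₜ[ℂ] w ∈ LinearMap.ker (Tmap B) := by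
      simp [LinearMap.mem_ker, Tmap_apply, huw]
    have hmem := hX ξ hξ _ ht
    have : (iotaMap B (u ⊗ₜ[ℂ] w)).dualMap ξ = ξ u • B.flip w := by
      ext x
      simp [LinearMap.dualMap_apply, iotaMap_apply]
      ring
    rwa [this] at hmem
  obtain ⟨ξ, hξX, hξ0⟩ := Submodule.exists_mem_ne_zero_of_ne_bot hne
  obtain ⟨u, hu⟩ : ∃ u, ξ u ≠ 0 := by
    by_contra h
    push_neg at h
    exact hξ0 (by ext x; simp [h x])
  -- find w₀ ≠ 0 with B u w₀ = 0
  obtain ⟨w₀, hw₀mem, hw₀0⟩ : ∃ w₀, B u w₀ = 0 ∧ w₀ ≠ 0 := by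
    by_contra h
    push_neg at h
    have hinj : Function.Injective (B u) := by
      rw [← LinearMap.ker_eq_bot]
      rw [Submodule.eq_bot_iff]
      intro w hw
      exact h w hw
    have h1 := LinearMap.lift_rank_le_of_injective (B u) hinj
    rw [Module.rank_self, Cardinal.lift_one] at h1
    have h2 : (2 : Cardinal) ≤ Cardinal.lift.{0} (Module.rank ℂ W) := by
      have h3 : Cardinal.lift.{0} (2 : Cardinal) ≤ Cardinal.lift.{0} (Module.rank ℂ W) :=
        Cardinal.lift_le.mpr hrank
      rwa [Cardinal.lift_ofNat] at h3
    have := h2.trans h1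
    norm_num at this
  -- η := B.flip w₀ ∈ X, nonzero
  have hηX : B.flip w₀ ∈ X := by
    have := key ξ hξX u w₀ hw₀mem
    have h2 := X.smul_mem (ξ u)⁻¹ this
    rwa [smul_smul, inv_mul_cancel₀ hu, one_smul] at h2
  have hη0 : B.flip w₀ ≠ 0 := by
    intro h
    apply hw₀0
    apply hB2
    intro x
    have := congrFun (congrArg DFunLike.coe h) x
    simpa using this
  rintro _ ⟨w, rfl⟩
  by_cases hw : B.flip w = 0
  · rw [hw]; exact X.zero_mem
  by_cases hcase : ∃ u', B u' w = 0 ∧ B u' w₀ ≠ 0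
  · obtain ⟨u', h1, h2⟩ := hcase
    have := key _ hηX u' w h1
    simp only [LinearMap.flip_apply] at this
    have h3 := X.smul_mem (B u' w₀)⁻¹ this
    rwa [smul_smul, inv_mul_cancel₀ h2, one_smul] at h3
  · push_neg at hcase
    -- ker (B.flip w) ≤ ker (B.flip w₀), so B.flip w₀ = c • B.flip w
    obtain ⟨u₁, hu₁⟩ : ∃ u₁, B u₁ w ≠ 0 := by
      by_contra h
      push_neg at h
      exact hw (by ext x; simpa using h x)
    set c : ℂ := B u₁ w₀ / B u₁ w with hc
    have heq : B.flip w₀ = c • B.flip w := by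
      ext x
      have hx : B (x - (B x w / B u₁ w) • u₁) w = 0 := by
        simp only [map_sub, map_smul, LinearMap.sub_apply, LinearMap.smul_apply,
          smul_eq_mul]
        field_simp
        ring
      have hx0 := hcase _ hx
      simp only [map_sub, map_smul, LinearMap.sub_apply, LinearMap.smul_apply,
        smul_eq_mul] at hx0
      have : B x w₀ = B x w / B u₁ w * B u₁ w₀ := sub_eq_zero.mp hx0
      simp only [LinearMap.flip_apply, LinearMap.smul_apply, smul_eq_mul]
      rw [this, hc]
      field_simp
    have hc0 : c ≠ 0 := by
      intro h
      rw [h, zero_smul] at heq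
      exact hη0 heq
    have : B.flip w = c⁻¹ • B.flip w₀ := by
      rw [heq, smul_smul, inv_mul_cancel₀ hc0, one_smul]
    rw [this]
    exact X.smul_mem _ hηX
end
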